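/- arXiv:0802.2322 — 9 statements merged into one kernel-verified Lean document; each statement's English description precedes it below -/
import Mathlib

section
/- For y in the interior of dom f, x in C, the point x is a farthest point of y in C with respect to the Bregman distance D_f if and only if for all c in C, D_f(c,x) ≤ ⟨∇f(y) − ∇f(x), c − x⟩. -/
open scoped RealInnerProductSpace

/-- Bregman distance for real-valued `f` with gradient `f'`. -/
noncomputable abbrev bregman {J : ℕ}
    (f : EuclideanSpace ℝ (Fin J) → ℝ) (f' : EuclideanSpace ℝ (Fin J) → EuclideanSpace ℝ (Fin J))
    (x y : EuclideanSpace ℝ (Fin J)) : ℝ :=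
  f x - f y - ⟪f' y, x - y⟫

theorem farthest_point_characterization {J : ℕ}
    (f : EuclideanSpace ℝ (Fin J) → ℝ) (U : Set (EuclideanSpace ℝ (Fin J)))
    (hU : IsOpen U) (hUne : U.Nonempty)
    (hconv : ConvexOn ℝ U f)
    (f' : EuclideanSpace ℝ (Fin J) → EuclideanSpace ℝ (Fin J))
    (hf' : ∀ y ∈ U, HasGradientAt f (f' y) y)
    (C : Set (EuclideanSpace ℝ (Fin J))) (hCne : C.Nonempty)
    (hCcp : IsCompact C) (hCb : Bornology.IsBounded C) (hCcl : IsClosed C) (hCU : C ⊆ U)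
    (y : EuclideanSpace ℝ (Fin J)) (hy : y ∈ U)
    (x : EuclideanSpace ℝ (Fin J)) (hx : x ∈ C) :
    (∀ c ∈ C, bregman f f' c y ≤ bregman f f' x y) ↔
      (∀ c ∈ C, bregman f f' c x ≤ ⟪f' y - f' x, c - x⟫) := by
  constructor <;> intro h c hc <;> have := h c hc <;>
    simp only [bregman, inner_sub_left, inner_sub_right] at * <;> linarith
end

section
/- Suppose f is a Legendre function on ℝ^J with U = int dom f, C ⊆ U nonempty compact, y ∈ U, x a farthest point of y in C (w.r.t. the left Bregman distance), λ > 1, and z := ∇f*(λ∇f(y) + (1−λ)∇f(x)) ∈ U. Then x is the unique farthest point of z in C. -/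
open scoped RealInnerProductSpace

/-- Gradient inequality for a convex function: nonstrict version. -/
lemma grad_ineq {J : ℕ}
    (f : EuclideanSpace ℝ (Fin J) → ℝ) (U : Set (EuclideanSpace ℝ (Fin J)))
    (hconv : ConvexOn ℝ U f)
    (f' : EuclideanSpace ℝ (Fin J) → EuclideanSpace ℝ (Fin J))
    (hf' : ∀ y ∈ U, HasGradientAt f (f' y) y)
    (b : EuclideanSpace ℝ (Fin J)) (hb : b ∈ U)
    (c : EuclideanSpace ℝ (Fin J)) (hc : c ∈ U) :
    ⟪f' b, c - b⟫ ≤ f c - f b := by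
  set g : ℝ → ℝ := fun t => f (b + t • (c - b)) with hg
  have hline : HasDerivAt (fun t : ℝ => b + t • (c - b)) (c - b) 0 := by
    simpa using ((hasDerivAt_id (0:ℝ)).smul_const (c - b)).const_add b
  have hfd : HasFDerivAt f (InnerProductSpace.toDual ℝ _ (f' b)) b :=
    (hasGradientAt_iff_hasFDerivAt.mp (hf' b hb))
  have hgd : HasDerivAt g ⟪f' b, c - b⟫ 0 := by
    have hfd2 : HasFDerivAt f (InnerProductSpace.toDual ℝ _ (f' b)) (b + (0:ℝ) • (c - b)) := by
      simpa using hfd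
    have := hfd2.comp_hasDerivAt (x := (0:ℝ))
      (f := fun t : ℝ => b + t • (c - b)) hline
    simp [InnerProductSpace.toDual_apply_apply] at this
    exact this
  rw [hasDerivAt_iff_tendsto_slope] at hgd
  have hgd' : Filter.Tendsto (slope g 0) (nhdsWithin 0 (Set.Ioi (0:ℝ)))
      (nhds ⟪f' b, c - b⟫) :=
    hgd.mono_left (nhdsWithin_mono 0 fun t ht => ne_of_gt ht)
  refine le_of_tendsto hgd' ?_
  filter_upwards [Ioc_mem_nhdsGT_of_mem (Set.mem_Ico.mpr ⟨le_rfl, one_pos⟩)] with t ht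
  obtain ⟨ht0, ht1⟩ := ht
  have hcomb : b + t • (c - b) = (1 - t) • b + t • c := by
    simp [smul_sub, sub_smul]; abel
  have hcv : f ((1 - t) • b + t • c) ≤ (1 - t) * f b + t * f c :=
    hconv.2 hb hc (by linarith) (le_of_lt ht0) (by ring)
  have : g t - g 0 ≤ t * (f c - f b) := by
    simp only [g, hcomb, zero_smul, add_zero]
    nlinarith [hcv]
  rw [slope_def_field, div_eq_inv_mul]
  rw [sub_zero]
  calc (t)⁻¹ * (g t - g 0) ≤ (t)⁻¹ * (t * (f c - f b)) := by
        apply mul_le_mul_of_nonneg_left this (by positivity)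
    _ = f c - f b := by field_simp

/-- Strict gradient inequality / positivity of the Bregman distance. -/
lemma bregman_pos {J : ℕ}
    (f : EuclideanSpace ℝ (Fin J) → ℝ) (U : Set (EuclideanSpace ℝ (Fin J)))
    (hconv : StrictConvexOn ℝ U f)
    (f' : EuclideanSpace ℝ (Fin J) → EuclideanSpace ℝ (Fin J))
    (hf' : ∀ y ∈ U, HasGradientAt f (f' y) y)
    (a : EuclideanSpace ℝ (Fin J)) (ha : a ∈ U)
    (b : EuclideanSpace ℝ (Fin J)) (hb : b ∈ U)
    (hab : a ≠ b) :
    0 < bregman f f' a b := by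
  set m : EuclideanSpace ℝ (Fin J) := (1/2 : ℝ) • b + (1/2 : ℝ) • a with hm
  have hmU : m ∈ U := hconv.1 hb ha (by norm_num) (by norm_num) (by norm_num)
  have h1 : ⟪f' b, m - b⟫ ≤ f m - f b :=
    grad_ineq f U hconv.convexOn f' hf' b hb m hmU
  have hmb : m - b = (1/2 : ℝ) • (a - b) := by
    simp [hm, smul_sub]
    module
  have h2 : f m < (1/2 : ℝ) * f b + (1/2 : ℝ) * f a :=
    hconv.2 hb ha (Ne.symm hab) (by norm_num) (by norm_num) (by norm_num)
  have h3 : ⟪f' b, m - b⟫ = (1/2 : ℝ) * ⟪f' b, a - b⟫ := by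
    rw [hmb, real_inner_smul_right]
  simp only [bregman]
  nlinarith [h1, h2, h3]

/-- If `x` is a farthest point of `y` in `C` w.r.t. the left Bregman distance of a Legendre
function `f`, `λ > 1`, and `z = ∇f*(λ∇f(y) + (1-λ)∇f(x)) ∈ U`, then `x` is the unique
farthest point of `z` in `C`. -/
theorem unique_farthest_of_pushout {J : ℕ}
    (f : EuclideanSpace ℝ (Fin J) → ℝ) (U : Set (EuclideanSpace ℝ (Fin J)))
    (hU : IsOpen U) (hUne : U.Nonempty)
    -- `f` is essentially strictly convex: strictly convex on `U`
    (hconv : StrictConvexOn ℝ U f)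
    -- `f` is differentiable on `U` with gradient `f'`
    (f' : EuclideanSpace ℝ (Fin J) → EuclideanSpace ℝ (Fin J))
    (hf' : ∀ y ∈ U, HasGradientAt f (f' y) y)
    -- `∇f` is injective on `U` (Legendre: a bijection onto `int dom f*`)
    (hinj : ∀ a ∈ U, ∀ b ∈ U, f' a = f' b → a = b)
    (C : Set (EuclideanSpace ℝ (Fin J))) (hCne : C.Nonempty)
    (hCcp : IsCompact C) (hCU : C ⊆ U)
    (y : EuclideanSpace ℝ (Fin J)) (hy : y ∈ U)
    (x : EuclideanSpace ℝ (Fin J)) (hx : x ∈ C)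
    (hfar : ∀ c ∈ C, bregman f f' c y ≤ bregman f f' x y)
    (lam : ℝ) (hlam : 1 < lam)
    -- `z := ∇f*(λ∇f(y) + (1-λ)∇f(x))`, assumed to lie in `U`
    (z : EuclideanSpace ℝ (Fin J)) (hz : z ∈ U)
    (hzgrad : f' z = lam • f' y + (1 - lam) • f' x) :
    (∀ c ∈ C, bregman f f' c z ≤ bregman f f' x z) ∧
      (∀ x' ∈ C, (∀ c ∈ C, bregman f f' c z ≤ bregman f f' x' z) → x' = x) := by
  have ident : ∀ c : EuclideanSpace ℝ (Fin J),
      bregman f f' c z - bregman f f' x z =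
        lam * (bregman f f' c y - bregman f f' x y) - (lam - 1) * bregman f f' c x := by
    intro c
    simp only [bregman, hzgrad, inner_add_left, real_inner_smul_left, inner_sub_right]
    ring
  have hstrict : ∀ c ∈ C, c ≠ x → bregman f f' c z < bregman f f' x z := by
    intro c hc hcx
    have h1 : bregman f f' c y - bregman f f' x y ≤ 0 := by
      have := hfar c hc; linarith
    have h2 : 0 < bregman f f' c x :=
      bregman_pos f U hconv f' hf' c (hCU hc) x (hCU hx) hcx
    have := ident c
    nlinarith
  constructor
  · intro c hc
    by_cases hcx : c = x
    · subst hcx; exact le_rfl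
    · exact (hstrict c hc hcx).le
  · intro x' hx' hfar'
    by_contra hne
    have h1 : bregman f f' x' z < bregman f f' x z := hstrict x' hx' hne
    have h2 : bregman f f' x z ≤ bregman f f' x' z := hfar' x hx
    linarith
end

section
/- The left Bregman farthest-distance function y ↦ sup_{c∈C} D_f(c,y) is continuous on U; if in addition ∇f is locally Lipschitz on U (e.g. f is twice continuously differentiable), then the farthest-distance function is locally Lipschitz on U. -/
open scoped RealInnerProductSpace
open Filter Topology

variable {J : ℕ}
local notation "E" => EuclideanSpace ℝ (Fin J)

/-- Directional derivative along a line as a `HasDerivAt`. -/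
lemma hasDerivAt_line (f : E → ℝ) {g y : E} (hg : HasGradientAt f g y) (v : E) :
    HasDerivAt (fun t : ℝ => f (y + t • v)) ⟪g, v⟫ 0 := by
  have hL : HasDerivAt (fun t : ℝ => y + t • v) v 0 := by
    simpa using ((hasDerivAt_id (0:ℝ)).smul_const v).const_add y
  have hF : HasFDerivAt f ((InnerProductSpace.toDual ℝ _) g) (y + (0:ℝ) • v) := by
    simpa using hg.hasFDerivAt
  have := hF.comp_hasDerivAt 0 hL
  simpa [InnerProductSpace.toDual_apply_apply, Function.comp_def] using this

/-- Subgradient inequality for convex differentiable functions. -/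
lemma grad_subgrad {f : E → ℝ} {U : Set E} (hc : ConvexOn ℝ U f)
    {x y g : E} (hx : x ∈ U) (hy : y ∈ U) (hg : HasGradientAt f g y) :
    f y + ⟪g, x - y⟫ ≤ f x := by
  have hder := hasDerivAt_line f hg (x - y)
  have hslope : Tendsto (slope (fun t : ℝ => f (y + t • (x - y))) 0) (𝓝[≠] 0)
      (𝓝 ⟪g, x - y⟫) := hasDerivAt_iff_tendsto_slope.1 hder
  have hle : ∀ t ∈ Set.Ioc (0:ℝ) 1,
      slope (fun t : ℝ => f (y + t • (x - y))) 0 t ≤ f x - f y := by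
    intro t ht
    have h1 : y + t • (x - y) = (1 - t) • y + t • x := by module
    have := hc.2 hy hx (by linarith [ht.2] : (0:ℝ) ≤ 1 - t) ht.1.le (by ring)
    have h2 : f (y + t • (x - y)) ≤ (1 - t) * f y + t * f x := by rw [h1]; simpa using this
    have ht0 : (0:ℝ) < t := ht.1
    simp only [slope_def_field, sub_zero, smul_zero, zero_smul, add_zero] at *
    rw [div_le_iff₀ ht0]
    nlinarith
  have hne : (𝓝[Set.Ioc (0:ℝ) 1] 0).NeBot := by
    refine mem_closure_iff_nhdsWithin_neBot.1 ?_
    have : (0:ℝ) ∈ closure (Set.Ioc (0:ℝ) 1) := by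
      rw [closure_Ioc one_ne_zero.symm]; exact ⟨le_refl 0, zero_le_one⟩
    exact this
  have hmono : 𝓝[Set.Ioc (0:ℝ) 1] (0:ℝ) ≤ 𝓝[≠] 0 :=
    nhdsWithin_mono 0 (fun t ht => ne_of_gt ht.1)
  have := le_of_tendsto (hslope.mono_left hmono)
    (eventually_nhdsWithin_of_forall hle)
  linarith

/-- Uniqueness of subgradients at a point of differentiability. -/
lemma subgrad_unique {f : E → ℝ} {U : Set E} (hU : IsOpen U)
    {y g g' : E} (hy : y ∈ U) (hg' : HasGradientAt f g' y)
    (hsub : ∀ x ∈ U, f y + ⟪g, x - y⟫ ≤ f x) : g = g' := by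
  have key : ∀ v : E, ⟪g, v⟫ ≤ ⟪g', v⟫ := by
    intro v
    have hder := hasDerivAt_line f hg' v
    have hslope : Tendsto (slope (fun t : ℝ => f (y + t • v)) 0) (𝓝[≠] 0)
        (𝓝 ⟪g', v⟫) := hasDerivAt_iff_tendsto_slope.1 hder
    have hmem : ∀ᶠ t in 𝓝 (0:ℝ), y + t • v ∈ U := by
      have hc : Continuous (fun t : ℝ => y + t • v) := by continuity
      have : (fun t : ℝ => y + t • v) 0 ∈ U := by simpa using hy
      exact hc.continuousAt.eventually_mem (hU.mem_nhds this)
    have hle : ∀ᶠ t in 𝓝[Set.Ioi (0:ℝ)] 0,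
        ⟪g, v⟫ ≤ slope (fun t : ℝ => f (y + t • v)) 0 t := by
      filter_upwards [nhdsWithin_le_nhds hmem, self_mem_nhdsWithin] with t htU ht
      have := hsub _ htU
      have h0 : y + t • v - y = t • v := by abel
      rw [h0, real_inner_smul_right] at this
      have ht0 : (0:ℝ) < t := ht
      simp only [slope_def_field, sub_zero, smul_zero, zero_smul, add_zero]
      rw [le_div_iff₀ ht0]
      nlinarith
    have hne : (𝓝[Set.Ioi (0:ℝ)] 0).NeBot := by
      refine mem_closure_iff_nhdsWithin_neBot.1 ?_
      rw [closure_Ioi]; exact Set.self_mem_Ici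
    have hmono : 𝓝[Set.Ioi (0:ℝ)] (0:ℝ) ≤ 𝓝[≠] 0 :=
      nhdsWithin_mono 0 (fun t ht => ne_of_gt ht)
    exact ge_of_tendsto (hslope.mono_left hmono) hle
  have h1 : ∀ v : E, ⟪g - g', v⟫ ≤ 0 := by
    intro v
    have := key v
    rw [inner_sub_left]; linarith
  have h2 : ⟪g - g', g - g'⟫ ≤ 0 := h1 _
  have := real_inner_self_nonneg (x := g - g')
  have h3 : ⟪g - g', g - g'⟫ = 0 := le_antisymm h2 this
  have := inner_self_eq_zero.1 h3
  exact sub_eq_zero.1 this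

set_option maxHeartbeats 1000000 in
/-- The gradient of a convex differentiable function is continuous on an open set. -/
lemma grad_continuousOn {f : E → ℝ} {U : Set E} (hU : IsOpen U)
    (hconv : ConvexOn ℝ U f) {f' : E → E}
    (hf' : ∀ y ∈ U, HasGradientAt f (f' y) y) : ContinuousOn f' U := by
  have hfc : ContinuousOn f U := fun y hy =>
    ((hf' y hy).hasFDerivAt.differentiableAt.continuousAt).continuousWithinAt
  intro y0 hy0
  obtain ⟨ε, hε, hball⟩ := Metric.isOpen_iff.1 hU y0 hy0
  set r : ℝ := ε / 3 with hr
  have hr0 : 0 < r := by positivity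
  have hsub2 : Metric.closedBall y0 (2 * r) ⊆ U := by
    refine subset_trans ?_ hball
    intro z hz
    simp only [Metric.mem_closedBall] at hz
    simp only [Metric.mem_ball]
    linarith
  have hballU : Metric.ball y0 (2 * r) ⊆ U :=
    subset_trans Metric.ball_subset_closedBall hsub2
  -- f is Lipschitz on a smaller ball
  have hcvb : ConvexOn ℝ (Metric.ball y0 (2 * r)) f :=
    hconv.subset hballU (convex_ball y0 (2 * r))
  have hbd : Bornology.IsBounded (f '' Metric.ball y0 (2 * r)) := by
    have hcp : IsCompact (f '' Metric.closedBall y0 (2 * r)) :=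
      (isCompact_closedBall y0 (2 * r)).image_of_continuousOn (hfc.mono hsub2)
    exact hcp.isBounded.subset
      (Set.image_mono (f := f) Metric.ball_subset_closedBall)
  obtain ⟨K, hK⟩ := hcvb.exists_lipschitzOnWith_of_isBounded
    (show 3 / 2 * r < 2 * r by linarith) hbd
  -- gradient bounded by K on closedBall y0 r
  have hgb : ∀ x ∈ Metric.closedBall y0 r, ‖f' x‖ ≤ K := by
    intro x hx
    have hxU : x ∈ U := hsub2 (Metric.closedBall_subset_closedBall (by linarith) hx)
    have hnb : Metric.ball y0 (3 / 2 * r) ∈ 𝓝 x := by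
      refine (Metric.isOpen_ball).mem_nhds ?_
      simp only [Metric.mem_closedBall] at hx
      simp only [Metric.mem_ball]; linarith
    have := norm_fderiv_le_of_lipschitzOn ℝ hnb hK
    rwa [(hf' x hxU).hasFDerivAt.fderiv, LinearIsometryEquiv.norm_map] at this
  -- sequential argument
  rw [ContinuousWithinAt]
  apply tendsto_of_subseq_tendsto
  intro ns hns
  have hmemU : ∀ᶠ n in atTop, ns n ∈ U := hns.eventually_mem self_mem_nhdsWithin
  have hnsy : Tendsto ns atTop (𝓝 y0) := hns.mono_right nhdsWithin_le_nhds
  have hmemB : ∀ᶠ n in atTop, ns n ∈ Metric.closedBall y0 r :=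
    hnsy.eventually (Metric.closedBall_mem_nhds y0 hr0)
  obtain ⟨N, hN⟩ := (hmemU.and hmemB).exists_forall_of_atTop
  set u : ℕ → E := fun n => f' (ns (n + N)) with hu
  have humem : ∀ n, u n ∈ Metric.closedBall (0 : E) K := by
    intro n
    have := hgb _ (hN (n + N) (Nat.le_add_left N n)).2
    simpa [hu, Metric.mem_closedBall, dist_zero_right] using this
  obtain ⟨g, _, φ, hφ, hug⟩ :=
    (isCompact_closedBall (0 : E) K).tendsto_subseq humem
  have hshift : Tendsto (fun n => ns (φ n + N)) atTop (𝓝[U] y0) :=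
    hns.comp (tendsto_atTop_mono (fun n => Nat.le_add_right (φ n) N) hφ.tendsto_atTop)
  have hshifty : Tendsto (fun n => ns (φ n + N)) atTop (𝓝 y0) :=
    hshift.mono_right nhdsWithin_le_nhds
  have hgeq : g = f' y0 := by
    refine subgrad_unique hU hy0 (hf' y0 hy0) ?_
    intro x hx
    have hle : ∀ n, f (ns (φ n + N)) + ⟪f' (ns (φ n + N)), x - ns (φ n + N)⟫ ≤ f x := by
      intro n
      have hmem : ns (φ n + N) ∈ U := (hN (φ n + N) (Nat.le_add_left N (φ n))).1
      exact grad_subgrad hconv hx hmem (hf' _ hmem)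
    have h1 : Tendsto (fun n => f (ns (φ n + N))) atTop (𝓝 (f y0)) :=
      (hfc y0 hy0).tendsto.comp hshift
    have h2 : Tendsto (fun n => (⟪f' (ns (φ n + N)), x - ns (φ n + N)⟫ : ℝ))
        atTop (𝓝 ⟪g, x - y0⟫) := by
      have : Tendsto (fun n => u (φ n)) atTop (𝓝 g) := hug
      exact Filter.Tendsto.inner this (tendsto_const_nhds.sub hshifty)
    exact le_of_tendsto (h1.add h2) (Filter.Eventually.of_forall hle)
  exact ⟨fun n => φ n + N, by rw [← hgeq]; exact hug⟩

lemma breg_contOn {f : E → ℝ} {U : Set E} (hfc : ContinuousOn f U)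
    {C : Set E} (hCU : C ⊆ U) (f' : E → E) (y : E) :
    ContinuousOn (fun c => bregman f f' c y) C := by
  apply ContinuousOn.sub
  · exact (hfc.mono hCU).sub continuousOn_const
  · exact (Continuous.inner continuous_const
      (continuous_id.sub continuous_const)).continuousOn

lemma F_diff_le {f : E → ℝ} {U : Set E} (hfc : ContinuousOn f U) {f' : E → E}
    {C : Set E} (hCne : C.Nonempty) (hCcp : IsCompact C) (hCU : C ⊆ U)
    {M : ℝ} (hM : ∀ c ∈ C, ‖c‖ ≤ M) (y1 y2 : E) :
    sSup ((fun c => bregman f f' c y1) '' C) ≤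
      sSup ((fun c => bregman f f' c y2) '' C) +
        (|f y2 - f y1| + ‖f' y1 - f' y2‖ * M + |⟪f' y1, y1⟫ - ⟪f' y2, y2⟫|) := by
  have hbdd : BddAbove ((fun c => bregman f f' c y2) '' C) :=
    (hCcp.image_of_continuousOn (breg_contOn hfc hCU f' y2)).bddAbove
  apply csSup_le (hCne.image _)
  rintro _ ⟨c, hc, rfl⟩
  have h2 : bregman f f' c y2 ≤ sSup ((fun c => bregman f f' c y2) '' C) :=
    le_csSup hbdd (Set.mem_image_of_mem _ hc)
  have hCS : ⟪f' y2 - f' y1, c⟫ ≤ ‖f' y1 - f' y2‖ * M := by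
    calc ⟪f' y2 - f' y1, c⟫ ≤ ‖f' y2 - f' y1‖ * ‖c‖ := real_inner_le_norm _ _
    _ ≤ ‖f' y2 - f' y1‖ * M :=
        mul_le_mul_of_nonneg_left (hM c hc) (norm_nonneg _)
    _ = ‖f' y1 - f' y2‖ * M := by rw [norm_sub_rev]
  have hexp : bregman f f' c y1 - bregman f f' c y2 =
      (f y2 - f y1) + ⟪f' y2 - f' y1, c⟫ + (⟪f' y1, y1⟫ - ⟪f' y2, y2⟫) := by
    simp only [bregman, inner_sub_left, inner_sub_right]
    ring
  have ha1 : f y2 - f y1 ≤ |f y2 - f y1| := le_abs_self _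
  have ha2 : ⟪f' y1, y1⟫ - ⟪f' y2, y2⟫ ≤ |⟪f' y1, y1⟫ - ⟪f' y2, y2⟫| := le_abs_self _
  linarith

/-- The left Bregman farthest-distance function `y ↦ sup_{c∈C} D_f(c,y)` is continuous
on `U`; if moreover `∇f` is locally Lipschitz on `U`, then so is the farthest-distance
function. -/
theorem farthest_distance_continuous_and_locally_lipschitz {J : ℕ}
    (f : EuclideanSpace ℝ (Fin J) → ℝ) (U : Set (EuclideanSpace ℝ (Fin J)))
    (hU : IsOpen U) (hUne : U.Nonempty)
    (hconv : StrictConvexOn ℝ U f)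
    (f' : EuclideanSpace ℝ (Fin J) → EuclideanSpace ℝ (Fin J))
    (hf' : ∀ y ∈ U, HasGradientAt f (f' y) y)
    (hcoer : Filter.Tendsto (fun x : EuclideanSpace ℝ (Fin J) => f x / ‖x‖)
      (Filter.comap norm Filter.atTop) Filter.atTop)
    (C : Set (EuclideanSpace ℝ (Fin J))) (hCne : C.Nonempty)
    (hCcp : IsCompact C) (hCU : C ⊆ U) :
    ContinuousOn (fun y => sSup ((fun c => bregman f f' c y) '' C)) U ∧
      ((∀ y ∈ U, ∃ (K : NNReal) (ε : ℝ), 0 < ε ∧ Metric.ball y ε ⊆ U ∧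
          LipschitzOnWith K f' (Metric.ball y ε)) →
        ∀ y ∈ U, ∃ (K : NNReal) (ε : ℝ), 0 < ε ∧ Metric.ball y ε ⊆ U ∧
          LipschitzOnWith K (fun z => sSup ((fun c => bregman f f' c z) '' C))
            (Metric.ball y ε)) := by
  have hcvx : ConvexOn ℝ U f := hconv.convexOn
  have hfc : ContinuousOn f U := fun y hy =>
    ((hf' y hy).hasFDerivAt.differentiableAt.continuousAt).continuousWithinAt
  have hf'c : ContinuousOn f' U := grad_continuousOn hU hcvx hf'
  obtain ⟨M0, hM0⟩ := hCcp.isBounded.exists_norm_le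
  set M : ℝ := max M0 0 with hMdef
  have hM : ∀ c ∈ C, ‖c‖ ≤ M := fun c hc => le_trans (hM0 c hc) (le_max_left _ _)
  have hMnn : 0 ≤ M := le_max_right _ _
  set F : EuclideanSpace ℝ (Fin J) → ℝ :=
    fun y => sSup ((fun c => bregman f f' c y) '' C) with hF
  have hkey : ∀ y1 y2, |F y1 - F y2| ≤
      |f y2 - f y1| + ‖f' y1 - f' y2‖ * M + |⟪f' y1, y1⟫ - ⟪f' y2, y2⟫| := by
    intro y1 y2
    rw [abs_sub_le_iff]
    constructor
    · have h := F_diff_le hfc (f' := f') hCne hCcp hCU hM y1 y2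
      show sSup ((fun c => bregman f f' c y1) '' C) -
        sSup ((fun c => bregman f f' c y2) '' C) ≤ _
      linarith
    · have h := F_diff_le hfc (f' := f') hCne hCcp hCU hM y2 y1
      rw [abs_sub_comm (f y1), norm_sub_rev (f' y2),
        abs_sub_comm (⟪f' y2, y2⟫ : ℝ)] at h
      show sSup ((fun c => bregman f f' c y2) '' C) -
        sSup ((fun c => bregman f f' c y1) '' C) ≤ _
      linarith
  constructor
  · -- continuity
    intro y0 hy0
    rw [ContinuousWithinAt, tendsto_iff_dist_tendsto_zero]
    have hEc : ContinuousWithinAt (fun y =>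
        |f y0 - f y| + ‖f' y - f' y0‖ * M + |⟪f' y, y⟫ - ⟪f' y0, y0⟫|) U y0 := by
      refine ContinuousWithinAt.add (ContinuousWithinAt.add ?_ ?_) ?_
      · exact (continuousWithinAt_const.sub (hfc y0 hy0)).abs
      · exact (((hf'c y0 hy0).sub continuousWithinAt_const).norm).mul
          continuousWithinAt_const
      · exact (((hf'c y0 hy0).inner continuousWithinAt_id).sub
          continuousWithinAt_const).abs
    have h0 : |f y0 - f y0| + ‖f' y0 - f' y0‖ * M + |⟪f' y0, y0⟫ - ⟪f' y0, y0⟫| = 0 := by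
      simp
    refine squeeze_zero (fun t => dist_nonneg) (fun t => ?_) (h0 ▸ hEc.tendsto)
    rw [Real.dist_eq]
    exact hkey t y0
  · -- local Lipschitz
    intro hloc y hyU
    obtain ⟨K, ε, hε, hballU, hKlip⟩ := hloc y hyU
    set δ : ℝ := ε / 2 with hδdef
    have hδ : 0 < δ := by positivity
    have hδsub : Metric.ball y δ ⊆ Metric.ball y ε :=
      Metric.ball_subset_ball (by linarith)
    have hδU : Metric.ball y δ ⊆ U := subset_trans hδsub hballU
    set B : ℝ := ‖f' y‖ + K * ε with hBdef
    have hBnn : 0 ≤ B := by positivity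
    have hyball : y ∈ Metric.ball y ε := Metric.mem_ball_self hε
    have hf'bd : ∀ z ∈ Metric.ball y δ, ‖f' z‖ ≤ B := by
      intro z hz
      have h1 : dist (f' z) (f' y) ≤ K * dist z y := hKlip.dist_le_mul _ (hδsub hz) _ hyball
      have h2 : dist z y ≤ ε := le_of_lt (lt_of_lt_of_le (Metric.mem_ball.1 hz) (by linarith))
      have h3 : ‖f' z‖ ≤ ‖f' y‖ + dist (f' z) (f' y) := by
        rw [dist_eq_norm]
        have := norm_sub_norm_le (f' z) (f' y)
        linarith [abs_le.1 (abs_norm_sub_norm_le (f' z) (f' y))]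
      have h4 : (K:ℝ) * dist z y ≤ K * ε := by
        exact mul_le_mul_of_nonneg_left h2 K.coe_nonneg
      linarith
    -- f is B-Lipschitz on ball y δ
    have hflip : LipschitzOnWith B.toNNReal f (Metric.ball y δ) := by
      apply (convex_ball y δ).lipschitzOnWith_of_nnnorm_fderiv_le
        (fun x hx => ((hf' x (hδU hx)).hasFDerivAt.differentiableAt))
        (fun x hx => ?_)
      have : ‖fderiv ℝ f x‖ = ‖f' x‖ := by
        rw [(hf' x (hδU hx)).hasFDerivAt.fderiv, LinearIsometryEquiv.norm_map]
      rw [← NNReal.coe_le_coe, coe_nnnorm, Real.coe_toNNReal _ hBnn, this]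
      exact hf'bd x hx
    set R : ℝ := ‖y‖ + ε with hRdef
    have hzR : ∀ z ∈ Metric.ball y δ, ‖z‖ ≤ R := by
      intro z hz
      have h2 : dist z y ≤ ε := le_of_lt (lt_of_lt_of_le (Metric.mem_ball.1 hz) (by linarith))
      have h3 : ‖z‖ - ‖y‖ ≤ ‖z - y‖ := norm_sub_norm_le z y
      rw [← dist_eq_norm] at h3
      linarith
    set L : ℝ := B + K * M + (K * R + B) with hLdef
    refine ⟨L.toNNReal, δ, hδ, hδU, LipschitzOnWith.of_dist_le_mul fun y1 hy1 y2 hy2 => ?_⟩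
    have e1 : |f y2 - f y1| ≤ B * dist y1 y2 := by
      have := hflip.dist_le_mul _ hy2 _ hy1
      rw [Real.dist_eq, Real.coe_toNNReal _ hBnn, dist_comm y2 y1] at this
      exact this
    have e2 : ‖f' y1 - f' y2‖ ≤ K * dist y1 y2 := by
      have := hKlip.dist_le_mul _ (hδsub hy1) _ (hδsub hy2)
      rwa [dist_eq_norm] at this
    have e3 : |⟪f' y1, y1⟫ - ⟪f' y2, y2⟫| ≤ (K * R + B) * dist y1 y2 := by
      have hsplit : (⟪f' y1, y1⟫ : ℝ) - ⟪f' y2, y2⟫ =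
          ⟪f' y1 - f' y2, y1⟫ + ⟪f' y2, y1 - y2⟫ := by
        simp only [inner_sub_left, inner_sub_right]; ring
      rw [hsplit]
      have i1 : |(⟪f' y1 - f' y2, y1⟫ : ℝ)| ≤ (K * dist y1 y2) * R := by
        calc |(⟪f' y1 - f' y2, y1⟫ : ℝ)| ≤ ‖f' y1 - f' y2‖ * ‖y1‖ :=
              abs_real_inner_le_norm _ _
        _ ≤ (K * dist y1 y2) * R := by
            apply mul_le_mul e2 (hzR y1 hy1) (norm_nonneg _)
            positivity
      have i2 : |(⟪f' y2, y1 - y2⟫ : ℝ)| ≤ B * dist y1 y2 := by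
        calc |(⟪f' y2, y1 - y2⟫ : ℝ)| ≤ ‖f' y2‖ * ‖y1 - y2‖ :=
              abs_real_inner_le_norm _ _
        _ ≤ B * dist y1 y2 := by
            rw [← dist_eq_norm]
            exact mul_le_mul_of_nonneg_right (hf'bd y2 hy2) dist_nonneg
      calc |(⟪f' y1 - f' y2, y1⟫ : ℝ) + ⟪f' y2, y1 - y2⟫| ≤
            |(⟪f' y1 - f' y2, y1⟫ : ℝ)| + |(⟪f' y2, y1 - y2⟫ : ℝ)| := abs_add_le _ _
      _ ≤ (K * dist y1 y2) * R + B * dist y1 y2 := add_le_add i1 i2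
      _ = (K * R + B) * dist y1 y2 := by ring
    have e4 : ‖f' y1 - f' y2‖ * M ≤ (K * dist y1 y2) * M :=
      mul_le_mul_of_nonneg_right e2 hMnn
    have htot : dist (F y1) (F y2) ≤ L * dist y1 y2 := by
      rw [Real.dist_eq]
      calc |F y1 - F y2| ≤ |f y2 - f y1| + ‖f' y1 - f' y2‖ * M +
            |⟪f' y1, y1⟫ - ⟪f' y2, y2⟫| := hkey y1 y2
      _ ≤ B * dist y1 y2 + (K * dist y1 y2) * M + (K * R + B) * dist y1 y2 :=
          add_le_add (add_le_add e1 e4) e3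
      _ = L * dist y1 y2 := by ring
    refine le_trans htot (mul_le_mul_of_nonneg_right ?_ dist_nonneg)
    exact Real.le_coe_toNNReal L
end

section
/- For all x, y ∈ U, all farthest points p of x and q of y in C satisfy ⟨q − p, ∇f(x) − ∇f(y)⟩ ≥ 0; consequently the operator x* ↦ −Q_C(∇f*(x*)) is monotone on ℝ^J. -/
open scoped RealInnerProductSpace

/-- The left Bregman farthest-point map `Q_C` of a compact set `C`. -/
def farthestSet {J : ℕ}
    (f : EuclideanSpace ℝ (Fin J) → ℝ) (f' : EuclideanSpace ℝ (Fin J) → EuclideanSpace ℝ (Fin J))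
    (C : Set (EuclideanSpace ℝ (Fin J))) (y : EuclideanSpace ℝ (Fin J)) :
    Set (EuclideanSpace ℝ (Fin J)) :=
  {c ∈ C | ∀ d ∈ C, bregman f f' d y ≤ bregman f f' c y}

/-- Farthest points satisfy `⟪q − p, ∇f(x) − ∇f(y)⟫ ≥ 0`, hence
`x* ⇉ −Q_C(∇f*(x*))` is monotone on `ℝ^J`. -/
theorem farthest_point_map_monotone {J : ℕ}
    (f : EuclideanSpace ℝ (Fin J) → ℝ) (U : Set (EuclideanSpace ℝ (Fin J)))
    (hU : IsOpen U) (hUne : U.Nonempty)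
    (hconv : StrictConvexOn ℝ U f)
    (f' : EuclideanSpace ℝ (Fin J) → EuclideanSpace ℝ (Fin J))
    (hf' : ∀ y ∈ U, HasGradientAt f (f' y) y)
    (hcoer : Filter.Tendsto (fun x : EuclideanSpace ℝ (Fin J) => f x / ‖x‖)
      (Filter.comap norm Filter.atTop) Filter.atTop)
    (g : EuclideanSpace ℝ (Fin J) → EuclideanSpace ℝ (Fin J))
    (hgU : ∀ s, g s ∈ U) (hgr : ∀ s, f' (g s) = s) (hgl : ∀ y ∈ U, g (f' y) = y)
    (hgcont : Continuous g)
    (C : Set (EuclideanSpace ℝ (Fin J))) (hCne : C.Nonempty)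
    (hCcp : IsCompact C) (hCU : C ⊆ U) :
    (∀ x ∈ U, ∀ y ∈ U, ∀ p ∈ farthestSet f f' C x, ∀ q ∈ farthestSet f f' C y,
        0 ≤ ⟪q - p, f' x - f' y⟫) ∧
      (∀ a b : EuclideanSpace ℝ (Fin J), ∀ u ∈ farthestSet f f' C (g a),
        ∀ v ∈ farthestSet f f' C (g b), 0 ≤ ⟪(-u) - (-v), a - b⟫) := by
  have key : ∀ x ∈ U, ∀ y ∈ U, ∀ p ∈ farthestSet f f' C x, ∀ q ∈ farthestSet f f' C y,
      0 ≤ ⟪q - p, f' x - f' y⟫ := by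
    intro x _ y _ p hp q hq
    have h1 : bregman f f' q x ≤ bregman f f' p x := hp.2 q hq.1
    have h2 : bregman f f' p y ≤ bregman f f' q y := hq.2 p hp.1
    simp only [bregman, inner_sub_right] at h1 h2
    have e1 : ⟪q - p, f' x - f' y⟫
        = ⟪f' x, q⟫ - ⟪f' y, q⟫ - ⟪f' x, p⟫ + ⟪f' y, p⟫ := by
      rw [real_inner_comm]
      simp only [inner_sub_left, inner_sub_right]
      ring
    linarith
  refine ⟨key, fun a b u hu v hv => ?_⟩
  have := key (g a) (hgU a) (g b) (hgU b) u hu v hv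
  rw [hgr a, hgr b] at this
  have e : (-u) - (-v) = v - u := by abel
  rw [e]
  exact this
end

section
/- If C is D_f-Klee (each y ∈ U has a unique farthest point in C with respect to the left Bregman distance D_f), then C is a singleton. -/
open scoped RealInnerProductSpace
open Set Filter

lemma subgrad_ineq {E : Type*} [NormedAddCommGroup E] [InnerProductSpace ℝ E]
    [CompleteSpace E] {U : Set E} {f : E → ℝ} (hconv : ConvexOn ℝ U f)
    {y z : E} (hy : y ∈ U) (hz : z ∈ U) {G : E}
    (hgrad : HasGradientAt f G y) : f y + ⟪G, z - y⟫ ≤ f z := by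
  have h2 : HasDerivAt (fun t : ℝ => y + t • (z - y)) (z - y) 0 := by
    simpa using ((hasDerivAt_id (0 : ℝ)).smul_const (z - y)).const_add y
  have h1 : HasDerivAt (fun t : ℝ => f (y + t • (z - y))) ⟪G, z - y⟫ 0 := by
    have hf0 : HasFDerivAt f ((InnerProductSpace.toDual ℝ E) G) (y + (0:ℝ) • (z - y)) := by
      simpa using hgrad.hasFDerivAt
    have h3 := hf0.comp_hasDerivAt 0 h2
    simpa [InnerProductSpace.toDual_apply_apply, Function.comp_def] using h3
  have hslope : ∀ t ∈ Set.Ioc (0:ℝ) 1,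
      slope (fun t : ℝ => f (y + t • (z - y))) 0 t ≤ f z - f y := by
    intro t ht
    have hcomb : f ((1 - t) • y + t • z) ≤ (1 - t) * f y + t * f z :=
      hconv.2 hy hz (by linarith [ht.2]) ht.1.le (by ring)
    have heq : (1 - t) • y + t • z = y + t • (z - y) := by
      simp [smul_sub, sub_smul]; abel
    rw [heq] at hcomb
    rw [slope_def_field]
    simp only [zero_smul, add_zero, sub_zero]
    rw [div_le_iff₀ ht.1]
    nlinarith [hcomb]
  have h4 : Filter.Tendsto (slope (fun t : ℝ => f (y + t • (z - y))) 0) (nhdsWithin 0 (Set.Ioi 0))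
      (nhds ⟪G, z - y⟫) := by
    refine (hasDerivAt_iff_tendsto_slope.1 h1).mono_left (nhdsWithin_mono _ ?_)
    intro x hx
    exact ne_of_gt hx
  have h5 : ⟪G, z - y⟫ ≤ f z - f y := by
    refine le_of_tendsto h4 ?_
    filter_upwards [Ioc_mem_nhdsGT (zero_lt_one)] with t ht
    exact hslope t ht
  have : f (y + (0:ℝ) • (z - y)) = f y := by simp
  linarith

lemma subgrad_strict {E : Type*} [NormedAddCommGroup E] [InnerProductSpace ℝ E]
    [CompleteSpace E] {U : Set E} {f : E → ℝ} (hconv : StrictConvexOn ℝ U f)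
    {y z : E} (hy : y ∈ U) (hz : z ∈ U) (hne : z ≠ y) {G : E}
    (hgrad : HasGradientAt f G y) : f y + ⟪G, z - y⟫ < f z := by
  have hm : (1/2 : ℝ) • y + (1/2 : ℝ) • z ∈ U :=
    hconv.1 hy hz (by norm_num) (by norm_num) (by norm_num)
  have hmid : f ((1/2 : ℝ) • y + (1/2 : ℝ) • z) < (1/2) * f y + (1/2) * f z :=
    hconv.2 hy hz (Ne.symm hne) (by norm_num) (by norm_num) (by norm_num)
  have hsub := subgrad_ineq hconv.convexOn hy hm hgrad
  have heq : (1/2 : ℝ) • y + (1/2 : ℝ) • z - y = (1/2 : ℝ) • (z - y) := by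
    rw [smul_sub]; module
  rw [heq, real_inner_smul_right] at hsub
  linarith

/-- If every `y ∈ U` has a unique farthest point in `C` w.r.t. the left Bregman distance
(`C` is `D_f`-Klee), then `C` is a singleton. -/
theorem klee_set_is_singleton {J : ℕ}
    (f : EuclideanSpace ℝ (Fin J) → ℝ) (U : Set (EuclideanSpace ℝ (Fin J)))
    (hU : IsOpen U) (hUne : U.Nonempty)
    (hconv : StrictConvexOn ℝ U f)
    (f' : EuclideanSpace ℝ (Fin J) → EuclideanSpace ℝ (Fin J))
    (hf' : ∀ y ∈ U, HasGradientAt f (f' y) y)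
    (hcoer : Filter.Tendsto (fun x : EuclideanSpace ℝ (Fin J) => f x / ‖x‖)
      (Filter.comap norm Filter.atTop) Filter.atTop)
    (g : EuclideanSpace ℝ (Fin J) → EuclideanSpace ℝ (Fin J))
    (hgU : ∀ s, g s ∈ U) (hgr : ∀ s, f' (g s) = s) (hgl : ∀ y ∈ U, g (f' y) = y)
    (hgcont : Continuous g)
    (C : Set (EuclideanSpace ℝ (Fin J))) (hCne : C.Nonempty)
    (hCcp : IsCompact C) (hCU : C ⊆ U)
    (hKlee : ∀ y ∈ U, ∃! x, x ∈ C ∧ ∀ c ∈ C, bregman f f' c y ≤ bregman f f' x y) :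
    ∃ c, C = {c} := by
  classical
  have hfo : ConvexOn ℝ U f := hconv.convexOn
  have hcf : ∀ ⦃y : EuclideanSpace ℝ (Fin J)⦄, y ∈ U → ContinuousAt f y := fun y hy =>
    (hf' y hy).hasFDerivAt.continuousAt
  have sub1 : ∀ {y z : EuclideanSpace ℝ (Fin J)}, y ∈ U → z ∈ U → f y + ⟪f' y, z - y⟫ ≤ f z := fun {y z} hy hz =>
    subgrad_ineq hfo hy hz (hf' y hy)
  have sub2 : ∀ {y z : EuclideanSpace ℝ (Fin J)}, y ∈ U → z ∈ U → z ≠ y → f y + ⟪f' y, z - y⟫ < f z :=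
    fun {y z} hy hz hne => subgrad_strict hconv hy hz hne (hf' y hy)
  -- reformulate the Klee property in dual coordinates
  have hKlee' : ∀ s : EuclideanSpace ℝ (Fin J), ∃! x, x ∈ C ∧ ∀ c ∈ C, f c - ⟪s, c⟫ ≤ f x - ⟪s, x⟫ := by
    intro s
    obtain ⟨x, ⟨hxC, hxm⟩, huniq⟩ := hKlee (g s) (hgU s)
    have hiff : ∀ x' : EuclideanSpace ℝ (Fin J), (∀ c ∈ C, bregman f f' c (g s) ≤ bregman f f' x' (g s)) ↔
        (∀ c ∈ C, f c - ⟪s, c⟫ ≤ f x' - ⟪s, x'⟫) := by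
      intro x'
      constructor <;> intro h c hc <;> have h2 := h c hc <;>
        simp only [bregman, hgr, inner_sub_right] at h2 ⊢ <;> linarith
    refine ⟨x, ⟨hxC, (hiff x).1 hxm⟩, ?_⟩
    intro x' hx'
    exact huniq x' ⟨hx'.1, (hiff x').2 hx'.2⟩
  choose X hXspec hXuniq using hKlee'
  have hXC : ∀ s : EuclideanSpace ℝ (Fin J), X s ∈ C := fun s => (hXspec s).1
  have hXmax : ∀ s : EuclideanSpace ℝ (Fin J), ∀ c ∈ C, f c - ⟪s, c⟫ ≤ f (X s) - ⟪s, X s⟫ := fun s => (hXspec s).2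
  obtain ⟨c₀, hc₀⟩ := hCne
  -- norm bound on C
  obtain ⟨K, hK⟩ : ∃ K : ℝ, ∀ c ∈ C, ‖c‖ ≤ K := by
    obtain ⟨K, hK⟩ := (hCcp.image continuous_norm).bddAbove
    exact ⟨K, fun c hc => hK (Set.mem_image_of_mem _ hc)⟩
  -- Fenchel conjugate
  set F : EuclideanSpace ℝ (Fin J) → ℝ := fun s => ⟪s, g s⟫ - f (g s) with hFdef
  have hFsub : ∀ s s' : EuclideanSpace ℝ (Fin J), F s + ⟪s' - s, g s⟫ ≤ F s' := by
    intro s s'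
    have h := sub1 (hgU s') (hgU s)
    rw [hgr] at h
    simp only [hFdef, inner_sub_left, inner_sub_right] at h ⊢
    linarith
  have hFmax : ∀ s : EuclideanSpace ℝ (Fin J), ∀ z ∈ U, ⟪s, z⟫ - f z ≤ F s := by
    intro s z hz
    have h := sub1 (hgU s) hz
    rw [hgr] at h
    simp only [hFdef, inner_sub_right] at h ⊢
    linarith
  have hFcont : Continuous F := by
    rw [continuous_iff_continuousAt]
    intro s
    exact ((continuous_id.inner hgcont).continuousAt).sub
      (((hcf (hgU s)).comp hgcont.continuousAt))
  -- the objective function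
  set Φ : EuclideanSpace ℝ (Fin J) → ℝ := fun s => (f (X s) - ⟪s, X s⟫) + F s with hΦdef
  have hΦmax : ∀ s : EuclideanSpace ℝ (Fin J), ∀ c ∈ C, f c - ⟪s, c⟫ + F s ≤ Φ s := by
    intro s c hc
    have := hXmax s c hc
    simp only [hΦdef]
    linarith
  -- continuity of Φ
  have hqcont : Continuous fun s : EuclideanSpace ℝ (Fin J) => f (X s) - ⟪s, X s⟫ := by
    have hlip : LipschitzWith (Real.toNNReal K) (fun s : EuclideanSpace ℝ (Fin J) => f (X s) - ⟪s, X s⟫) := by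
      apply LipschitzWith.of_dist_le_mul
      intro s t
      have hKnn : K ≤ (Real.toNNReal K : ℝ) := Real.le_coe_toNNReal K
      have hb : ∀ s t : EuclideanSpace ℝ (Fin J), f (X s) - ⟪s, X s⟫ - (f (X t) - ⟪t, X t⟫) ≤
          (Real.toNNReal K : ℝ) * dist s t := by
        intro s t
        have h1 := hXmax t (X s) (hXC s)
        have h2 : ⟪t - s, X s⟫ ≤ ‖t - s‖ * ‖X s‖ := real_inner_le_norm _ _
        have h3 : ‖X s‖ ≤ K := hK _ (hXC s)
        have h4 : ‖t - s‖ = dist s t := by rw [dist_comm, dist_eq_norm]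
        have h5 : ‖t - s‖ * ‖X s‖ ≤ (Real.toNNReal K : ℝ) * dist s t := by
          rw [← h4]
          have h3' : ‖X s‖ ≤ (Real.toNNReal K : ℝ) := h3.trans hKnn
          nlinarith [norm_nonneg (t - s), norm_nonneg (X s)]
        have h6 : ⟪t, X s⟫ - ⟪s, X s⟫ = ⟪t - s, X s⟫ := by rw [inner_sub_left]
        linarith
      rw [Real.dist_eq, abs_sub_le_iff]
      exact ⟨hb s t, by simpa [dist_comm] using hb t s⟩
    exact hlip.continuous
  have hΦcont : Continuous Φ := hqcont.add hFcont
  -- coercivity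
  obtain ⟨r, hr0, hrU⟩ : ∃ r > 0, Metric.closedBall c₀ r ⊆ U := by
    obtain ⟨ε, hε, hball⟩ := Metric.isOpen_iff.1 hU c₀ (hCU hc₀)
    exact ⟨ε / 2, by positivity, (Metric.closedBall_subset_ball (by linarith)).trans hball⟩
  obtain ⟨M, hM⟩ : ∃ M : ℝ, ∀ z ∈ Metric.closedBall c₀ r, f z ≤ M := by
    have hcomp : IsCompact (Metric.closedBall c₀ r) := isCompact_closedBall _ _
    have hcont : ContinuousOn f (Metric.closedBall c₀ r) := fun z hz =>
      (hcf (hrU hz)).continuousWithinAt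
    obtain ⟨zM, _, hzM⟩ := hcomp.exists_isMaxOn ⟨c₀, by simp [hr0.le]⟩ hcont
    exact ⟨f zM, fun z hz => hzM hz⟩
  have hMc₀ : f c₀ ≤ M := hM c₀ (by simp [hr0.le])
  have hcoerc : ∀ s : EuclideanSpace ℝ (Fin J), f c₀ - M + r * ‖s‖ ≤ Φ s := by
    intro s
    by_cases hs : s = 0
    · subst hs
      have h1 := hΦmax 0 c₀ hc₀
      have h2 : ⟪(0:EuclideanSpace ℝ (Fin J)), c₀⟫ - f c₀ ≤ F 0 := hFmax 0 c₀ (hCU hc₀)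
      simp only [inner_zero_left] at h1 h2
      simp only [norm_zero, mul_zero]
      linarith
    · set z : EuclideanSpace ℝ (Fin J) := c₀ + (r / ‖s‖) • s with hzdef
      have hns : (0:ℝ) < ‖s‖ := norm_pos_iff.2 hs
      have hzball : z ∈ Metric.closedBall c₀ r := by
        simp only [Metric.mem_closedBall, hzdef, dist_self_add_left, norm_smul]
        rw [Real.norm_eq_abs, abs_of_nonneg (by positivity)]
        rw [div_mul_cancel₀ _ (ne_of_gt hns)]
      have h1 : ⟪s, z⟫ = ⟪s, c₀⟫ + r * ‖s‖ := by
        rw [hzdef, inner_add_right, real_inner_smul_right, real_inner_self_eq_norm_mul_norm]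
        field_simp
      have h2 : ⟪s, z⟫ - f z ≤ F s := hFmax s z (hrU hzball)
      have h3 := hΦmax s c₀ hc₀
      have h4 : f z ≤ M := hM z hzball
      linarith
  -- existence of a minimizer
  obtain ⟨st, hstmin⟩ : ∃ st : EuclideanSpace ℝ (Fin J), ∀ s : EuclideanSpace ℝ (Fin J), Φ st ≤ Φ s := by
    set R : ℝ := max 0 ((Φ 0 + M - f c₀ + 1) / r) with hRdef
    have hcompB : IsCompact (Metric.closedBall (0:EuclideanSpace ℝ (Fin J)) R) := isCompact_closedBall _ _
    have h0B : (0:EuclideanSpace ℝ (Fin J)) ∈ Metric.closedBall (0:EuclideanSpace ℝ (Fin J)) R := by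
      simp only [Metric.mem_closedBall, dist_self, hRdef]
      exact le_max_left _ _
    obtain ⟨s0, hs0B, hs0min⟩ := hcompB.exists_isMinOn ⟨0, h0B⟩ hΦcont.continuousOn
    refine ⟨s0, fun s => ?_⟩
    by_cases hsB : s ∈ Metric.closedBall (0:EuclideanSpace ℝ (Fin J)) R
    · exact hs0min hsB
    · have h5 : R < ‖s‖ := by
        by_contra hcon
        exact hsB (by simpa [Metric.mem_closedBall, dist_zero_right] using not_lt.1 hcon)
      have h6 : Φ 0 + M - f c₀ + 1 ≤ r * R := by
        have hR2 : (Φ 0 + M - f c₀ + 1) / r ≤ R := le_max_right _ _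
        rw [div_le_iff₀ hr0] at hR2
        linarith
      have h7 : r * R ≤ r * ‖s‖ := by nlinarith
      have h8 := hcoerc s
      have h9 : Φ s0 ≤ Φ 0 := hs0min h0B
      linarith
  -- key step : at the minimizer, the farthest point is the base point itself
  have hkey : ∀ h : EuclideanSpace ℝ (Fin J), ⟪h, X st⟫ ≤ ⟪h, g st⟫ := by
    intro h
    have hstep : ∀ t : ℝ, 0 < t → ⟪h, X (st + t • h)⟫ ≤ ⟪h, g (st + t • h)⟫ := by
      intro t ht
      set s' : EuclideanSpace ℝ (Fin J) := st + t • h with hs'def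
      have hA := hstmin s'
      have hB := hΦmax st (X s') (hXC s')
      have hC' : F s' + ⟪st - s', g s'⟫ ≤ F st := hFsub s' st
      have hΦs' : Φ s' = f (X s') - ⟪s', X s'⟫ + F s' := rfl
      have hsub : st - s' = -(t • h) := by rw [hs'def]; abel
      rw [hsub, inner_neg_left, real_inner_smul_left] at hC'
      have hdiff : ⟪s', X s'⟫ = ⟪st, X s'⟫ + t * ⟪h, X s'⟫ := by
        rw [hs'def, inner_add_left, real_inner_smul_left]
      -- combine
      have : t * ⟪h, X s'⟫ ≤ t * ⟪h, g s'⟫ := by linarith [hA, hB, hC', hΦs' ▸ hA]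
      exact le_of_mul_le_mul_left (by linarith) ht
    -- take the limit t → 0⁺ along 1/(n+1)
    set sseq : ℕ → EuclideanSpace ℝ (Fin J) := fun n => st + (((n : ℝ) + 1)⁻¹) • h with hsseq
    have hslim : Filter.Tendsto sseq Filter.atTop (nhds st) := by
      have h1 : Filter.Tendsto (fun n : ℕ => (((n : ℝ) + 1)⁻¹) • h) Filter.atTop
          (nhds (0:EuclideanSpace ℝ (Fin J))) := by
        have h2 : Filter.Tendsto (fun n : ℕ => ((n : ℝ) + 1)⁻¹) Filter.atTop (nhds 0) := by
          simpa only [one_div] using (tendsto_one_div_add_atTop_nhds_zero_nat :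
            Filter.Tendsto (fun n : ℕ => 1 / ((n : ℝ) + 1)) Filter.atTop (nhds 0))
        simpa using h2.smul_const h
      rw [hsseq]
      simpa using (tendsto_const_nhds (x := st)).add h1
    obtain ⟨xb, hxbC, φ, hφmono, hφtend⟩ := hCcp.tendsto_subseq (fun n => hXC (sseq n))
    have hslimφ : Filter.Tendsto (sseq ∘ φ) Filter.atTop (nhds st) :=
      hslim.comp hφmono.tendsto_atTop
    have hxb : xb = X st := by
      apply hXuniq
      refine ⟨hxbC, ?_⟩
      intro c hc
      have hn : ∀ n, f c - ⟪sseq (φ n), c⟫ ≤ f (X (sseq (φ n))) - ⟪sseq (φ n), X (sseq (φ n))⟫ :=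
        fun n => hXmax _ c hc
      have hL : Filter.Tendsto (fun n => f c - ⟪sseq (φ n), c⟫) Filter.atTop
          (nhds (f c - ⟪st, c⟫)) :=
        (tendsto_const_nhds.sub ((hslimφ.inner tendsto_const_nhds)))
      have hR : Filter.Tendsto (fun n => f (X (sseq (φ n))) - ⟪sseq (φ n), X (sseq (φ n))⟫)
          Filter.atTop (nhds (f xb - ⟪st, xb⟫)) := by
        have hfx : Filter.Tendsto (fun n => f (X (sseq (φ n)))) Filter.atTop (nhds (f xb)) :=
          ((hcf (hCU hxbC)).tendsto).comp hφtend
        exact hfx.sub (hslimφ.inner hφtend)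
      exact le_of_tendsto_of_tendsto' hL hR hn
    have hinner : ∀ n, ⟪h, X (sseq (φ n))⟫ ≤ ⟪h, g (sseq (φ n))⟫ := by
      intro n
      exact hstep _ (by positivity)
    have hL2 : Filter.Tendsto (fun n => ⟪h, X (sseq (φ n))⟫) Filter.atTop (nhds ⟪h, xb⟫) :=
      Filter.Tendsto.inner tendsto_const_nhds hφtend
    have hR2 : Filter.Tendsto (fun n => ⟪h, g (sseq (φ n))⟫) Filter.atTop (nhds ⟪h, g st⟫) :=
      Filter.Tendsto.inner tendsto_const_nhds (hgcont.continuousAt.tendsto.comp hslimφ)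
    have := le_of_tendsto_of_tendsto' hL2 hR2 hinner
    rwa [hxb] at this
  have hXg : X st = g st := by
    have h1 := hkey (X st - g st)
    rw [← sub_nonpos, ← inner_sub_right] at h1
    rwa [real_inner_self_nonpos, sub_eq_zero] at h1
  -- conclude
  refine ⟨g st, Set.eq_singleton_iff_unique_mem.2 ⟨hXg ▸ hXC st, ?_⟩⟩
  intro c hc
  by_contra hne
  have hmax := hXmax st c hc
  rw [hXg] at hmax
  have hstrict := sub2 (hgU st) (hCU hc) hne
  rw [hgr, inner_sub_right] at hstrict
  linarith
end

section
/- Suppose f is additionally twice continuously differentiable on U. For every y ∈ U and direction w, the Dini subderivative of the farthest-distance function g := sup_{c∈C} D_f(c,·) at y in direction w equals max_{x ∈ Q_C(y)} ⟨∇²f(y)(y − x), w⟩, and g is Clarke regular at y with Clarke subdifferential ∇²f(y)[y − conv Q_C(y)]. -/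
open scoped RealInnerProductSpace
open Filter Metric Set

private abbrev Esp (J : ℕ) := EuclideanSpace ℝ (Fin J)

lemma myIsCompact_convexHull {J : ℕ} {K : Set (Esp J)} (hK : IsCompact K)
    (hne : K.Nonempty) : IsCompact (convexHull ℝ K) := by
  classical
  obtain ⟨c₀, hc₀⟩ := hne
  set n := J + 1 with hn
  have hφ : Continuous (fun p : (Fin n → ℝ) × (Fin n → Esp J) => ∑ i, p.1 i • p.2 i) := by
    apply continuous_finset_sum
    intro i _
    exact ((continuous_apply i).comp continuous_fst).smul
      ((continuous_apply i).comp continuous_snd)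
  have hset : convexHull ℝ K =
      (fun p : (Fin n → ℝ) × (Fin n → Esp J) => ∑ i, p.1 i • p.2 i) ''
        ((stdSimplex ℝ (Fin n)) ×ˢ (Set.univ.pi fun _ => K)) := by
    apply Set.Subset.antisymm
    · intro x hx
      obtain ⟨ι, hι, z, w, hzK, haff, hwpos, hwsum, hsum⟩ :=
        eq_pos_convex_span_of_mem_convexHull hx
      have hcard : Fintype.card ι ≤ n := by
        have h1 := haff.card_le_finrank_succ
        have h2 : Module.finrank ℝ ↥(vectorSpan ℝ (Set.range z)) ≤ J := by
          simpa [finrank_euclideanSpace_fin] using Submodule.finrank_le (vectorSpan ℝ (Set.range z))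
        omega
      obtain ⟨e⟩ := Function.Embedding.nonempty_of_card_le (β := Fin n) (by simpa using hcard)
      set w' : Fin n → ℝ := fun j => if h : ∃ i, e i = j then w h.choose else 0 with hw'
      set z' : Fin n → Esp J := fun j => if h : ∃ i, e i = j then z h.choose else c₀ with hz'
      have hwe : ∀ i, w' (e i) = w i := by
        intro i
        have h : ∃ i', e i' = e i := ⟨i, rfl⟩
        simp only [hw', dif_pos h]
        have := h.choose_spec
        rw [e.injective this]
      have hze : ∀ i, z' (e i) = z i := by
        intro i
        have h : ∃ i', e i' = e i := ⟨i, rfl⟩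
        simp only [hz', dif_pos h]
        have := h.choose_spec
        rw [e.injective this]
      have hsum_eq : ∀ (f : ℝ → Esp J → ℝ) , True := fun _ => trivial
      refine ⟨(w', z'), ⟨?_, ?_⟩, ?_⟩
      · constructor
        · intro j
          by_cases h : ∃ i, e i = j
          · simp only [hw', dif_pos h]; exact (hwpos _).le
          · simp [hw', dif_neg h]
        · have : ∑ j, w' j = ∑ j ∈ Finset.univ.map e, w' j := by
            symm
            apply Finset.sum_subset (Finset.subset_univ _)
            intro j _ hj
            have h : ¬ ∃ i, e i = j := by
              intro ⟨i, hi⟩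
              exact hj (Finset.mem_map.2 ⟨i, Finset.mem_univ _, hi⟩)
            simp [hw', dif_neg h]
          rw [this, Finset.sum_map]
          simpa [hwe] using hwsum
      · intro j _
        by_cases h : ∃ i, e i = j
        · simp only [hz', dif_pos h]; exact hzK ⟨_, rfl⟩
        · simpa [hz', dif_neg h] using hc₀
      · show ∑ j, w' j • z' j = x
        have : ∑ j, w' j • z' j = ∑ j ∈ Finset.univ.map e, w' j • z' j := by
          symm
          apply Finset.sum_subset (Finset.subset_univ _)
          intro j _ hj
          have h : ¬ ∃ i, e i = j := by
            intro ⟨i, hi⟩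
            exact hj (Finset.mem_map.2 ⟨i, Finset.mem_univ _, hi⟩)
          simp [hw', dif_neg h]
        rw [this, Finset.sum_map]
        simpa [hwe, hze] using hsum
    · rintro x ⟨⟨w, z⟩, ⟨⟨hw0, hw1⟩, hz⟩, rfl⟩
      exact (convex_convexHull ℝ K).sum_mem (fun i _ => hw0 i) hw1
        (fun i _ => subset_convexHull ℝ K (hz i (Set.mem_univ _)))
  rw [hset]
  exact (((isCompact_stdSimplex (𝕜 := ℝ) (ι := Fin n)).prod (isCompact_univ_pi fun _ => hK))).image hφ

lemma myle_of_forall_pos {a b : ℝ} (h : ∀ ε > 0, a ≤ b + ε) : a ≤ b := by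
  by_contra hc
  push_neg at hc
  have := h ((a - b) / 2) (by linarith)
  linarith

lemma mySupport_eq_hull {J : ℕ} {K : Set (Esp J)} (hK : IsCompact K) (hne : K.Nonempty) :
    {s : Esp J | ∀ w, ⟪s, w⟫ ≤ sSup ((fun k => ⟪k, w⟫) '' K)} = convexHull ℝ K := by
  apply Set.Subset.antisymm
  · intro s hs
    by_contra hcon
    obtain ⟨φ, u, hu1, hu2⟩ := geometric_hahn_banach_closed_point
      (convex_convexHull ℝ K) (myIsCompact_convexHull hK hne).isClosed hcon
    set w := (InnerProductSpace.toDual ℝ (Esp J)).symm φ with hw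
    have hφ : ∀ a : Esp J, φ a = ⟪a, w⟫ := by
      intro a
      rw [real_inner_comm, hw, InnerProductSpace.toDual_symm_apply]
    have h1 : sSup ((fun k => ⟪k, w⟫) '' K) ≤ u := by
      apply csSup_le (hne.image _)
      rintro x ⟨k, hk, rfl⟩
      exact (hφ k ▸ hu1 k (subset_convexHull ℝ K hk)).le
    have := (hs w).trans h1
    rw [← hφ s] at this
    exact absurd hu2 (not_lt.2 this)
  · intro s hs w
    have hbdd : BddAbove ((fun k => ⟪k, w⟫) '' K) :=
      (hK.image (continuous_id.inner continuous_const)).bddAbove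
    have hsub : K ⊆ {x : Esp J | ⟪x, w⟫ ≤ sSup ((fun k => ⟪k, w⟫) '' K)} := by
      intro k hk
      exact le_csSup hbdd ⟨k, hk, rfl⟩
    have hconv : Convex ℝ {x : Esp J | ⟪x, w⟫ ≤ sSup ((fun k => ⟪k, w⟫) '' K)} := by
      intro x hx y hy a b ha hb hab
      simp only [Set.mem_setOf_eq] at hx hy ⊢
      rw [inner_add_left, real_inner_smul_left, real_inner_smul_left]
      calc a * ⟪x, w⟫ + b * ⟪y, w⟫ ≤ a * sSup _ + b * sSup _ := by
            gcongr <;> assumption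
        _ = sSup ((fun k => ⟪k, w⟫) '' K) := by rw [← add_mul, hab, one_mul]
    exact convexHull_min hsub hconv hs


/-- Dini subderivative of `g` at `y` in direction `w`. -/
noncomputable def diniDeriv {J : ℕ} (g : EuclideanSpace ℝ (Fin J) → ℝ)
    (y w : EuclideanSpace ℝ (Fin J)) : ℝ :=
  Filter.liminf (fun t : ℝ => (g (y + t • w) - g y) / t) (nhdsWithin 0 (Set.Ioi 0))

/-- Clarke subderivative of `g` at `y` in direction `w`. -/
noncomputable def clarkeDeriv {J : ℕ} (g : EuclideanSpace ℝ (Fin J) → ℝ)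
    (y w : EuclideanSpace ℝ (Fin J)) : ℝ :=
  Filter.limsup (fun p : EuclideanSpace ℝ (Fin J) × ℝ => (g (p.1 + p.2 • w) - g p.1) / p.2)
    ((nhds y) ×ˢ (nhdsWithin 0 (Set.Ioi 0)))

set_option maxHeartbeats 1000000 in
/-- For `f` twice continuously differentiable, the Dini and Clarke subderivatives of the
farthest-distance function coincide and equal `max ⟪∇²f(y)(y − Q_C(y)), w⟫`; in particular
it is Clarke regular, with Clarke subdifferential `∇²f(y)[y − conv Q_C(y)]`. -/
theorem farthest_distance_clarke_regular {J : ℕ}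
    (f : EuclideanSpace ℝ (Fin J) → ℝ) (U : Set (EuclideanSpace ℝ (Fin J)))
    (hU : IsOpen U) (hUne : U.Nonempty)
    (hconv : StrictConvexOn ℝ U f)
    (f' : EuclideanSpace ℝ (Fin J) → EuclideanSpace ℝ (Fin J))
    (hf' : ∀ y ∈ U, HasGradientAt f (f' y) y)
    (hcoer : Filter.Tendsto (fun x : EuclideanSpace ℝ (Fin J) => f x / ‖x‖)
      (Filter.comap norm Filter.atTop) Filter.atTop)
    -- `f` is twice continuously differentiable on `U` with Hessian `f''`
    (f'' : EuclideanSpace ℝ (Fin J) → EuclideanSpace ℝ (Fin J) →L[ℝ] EuclideanSpace ℝ (Fin J))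
    (hf'' : ∀ y ∈ U, HasFDerivAt f' (f'' y) y)
    (hf''cont : ContinuousOn f'' U)
    (C : Set (EuclideanSpace ℝ (Fin J))) (hCne : C.Nonempty)
    (hCcp : IsCompact C) (hCU : C ⊆ U)
    (y : EuclideanSpace ℝ (Fin J)) (hy : y ∈ U) :
    (∀ w, diniDeriv (fun z => sSup ((fun c => bregman f f' c z) '' C)) y w =
        sSup ((fun x => ⟪f'' y (y - x), w⟫) '' farthestSet f f' C y)) ∧
      (∀ w, clarkeDeriv (fun z => sSup ((fun c => bregman f f' c z) '' C)) y w =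
        sSup ((fun x => ⟪f'' y (y - x), w⟫) '' farthestSet f f' C y)) ∧
      {s : EuclideanSpace ℝ (Fin J) |
          ∀ w, ⟪s, w⟫ ≤ clarkeDeriv (fun z => sSup ((fun c => bregman f f' c z) '' C)) y w} =
        (fun x => f'' y (y - x)) '' convexHull ℝ (farthestSet f f' C y) := by
  classical
  set g : Esp J → ℝ := fun z => sSup ((fun c => bregman f f' c z) '' C) with hg
  -- ### Step A: differentiability of `f` as Fréchet, and symmetry of the Hessian
  have hfd : ∀ z ∈ U, HasFDerivAt f (innerSL ℝ (f' z)) z := by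
    intro z hz
    have h := (hf' z hz).hasFDerivAt
    have he : InnerProductSpace.toDual ℝ (Esp J) (f' z) = innerSL ℝ (f' z) := by
      ext v; simp
    rwa [he] at h
  have hsymm : ∀ z ∈ U, ∀ u v : Esp J, ⟪f'' z u, v⟫ = ⟪f'' z v, u⟫ := by
    intro z hz u v
    have hev : ∀ᶠ x in nhds z, HasFDerivAt f (innerSL ℝ (f' x)) x := by
      filter_upwards [hU.mem_nhds hz] with x hx using hfd x hx
    have hD : HasFDerivAt (fun x => innerSL ℝ (f' x))
        ((innerSL ℝ (E := Esp J)).comp (f'' z)) z :=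
      ((innerSL ℝ (E := Esp J)).hasFDerivAt).comp z (hf'' z hz)
    have := second_derivative_symmetric_of_eventually hev hD u v
    simpa using this
  -- ### Step B: derivative of the Bregman distance in its second argument
  have hder : ∀ (c : Esp J), ∀ z ∈ U,
      HasFDerivAt (fun z => bregman f f' c z) (innerSL ℝ (f'' z (z - c))) z := by
    intro c z hz
    have h1 : HasFDerivAt (fun z : Esp J => f c - f z)
        (0 - innerSL ℝ (f' z)) z := (hasFDerivAt_const (f c) z).sub (hfd z hz)
    have h2 : HasFDerivAt (fun z : Esp J => (⟪f' z, c - z⟫ : ℝ))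
        ((fderivInnerCLM ℝ (f' z, c - z)).comp
          ((f'' z).prod ((0 : Esp J →L[ℝ] Esp J) - ContinuousLinearMap.id ℝ (Esp J)))) z :=
      (hf'' z hz).inner ℝ ((hasFDerivAt_const c z).sub (hasFDerivAt_id z))
    have h3 := h1.sub h2
    refine h3.congr_fderiv ?_
    ext v
    simp only [ContinuousLinearMap.coe_sub', Pi.sub_apply, ContinuousLinearMap.coe_comp',
      Function.comp_apply, ContinuousLinearMap.prod_apply, ContinuousLinearMap.zero_apply,
      ContinuousLinearMap.coe_id', id_eq, fderivInnerCLM_apply, innerSL_apply_apply,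
      ContinuousLinearMap.coe_zero', Pi.zero_apply, zero_sub]
    rw [hsymm z hz (z - c) v]
    simp only [inner_sub_right, ContinuousLinearMap.neg_apply, inner_neg_right,
      ContinuousLinearMap.coe_id', id_eq, innerSL_apply_apply]
    ring
  -- ### Step C: continuity
  have hfcont : ContinuousOn f U := fun z hz => (hfd z hz).continuousAt.continuousWithinAt
  have hφcont : ∀ z ∈ U, ContinuousOn (fun c => bregman f f' c z) C := by
    intro z hz
    apply ContinuousOn.sub
    · exact (hfcont.mono hCU).sub continuousOn_const
    · exact (continuous_const.inner (continuous_id.sub continuous_const)).continuousOn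
  have hbdd : ∀ z ∈ U, BddAbove ((fun c => bregman f f' c z) '' C) := fun z hz =>
    (hCcp.image_of_continuousOn (hφcont z hz)).bddAbove
  have himgne : ∀ z : Esp J, ((fun c => bregman f f' c z) '' C).Nonempty := fun z => hCne.image _
  have hle_g : ∀ z ∈ U, ∀ d ∈ C, bregman f f' d z ≤ g z := by
    intro z hz d hd
    exact le_csSup (hbdd z hz) ⟨d, hd, rfl⟩
  have hQg : ∀ z ∈ U, ∀ c ∈ farthestSet f f' C z, g z = bregman f f' c z := by
    intro z hz c hc
    refine le_antisymm (csSup_le (himgne z) ?_) (hle_g z hz c hc.1)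
    rintro x ⟨d, hd, rfl⟩
    exact hc.2 d hd
  have hQne : ∀ z ∈ U, (farthestSet f f' C z).Nonempty := by
    intro z hz
    obtain ⟨c, hcC, hcmax⟩ := hCcp.exists_isMaxOn hCne (hφcont z hz)
    exact ⟨c, hcC, fun d hd => hcmax hd⟩
  -- ### Step D: radius and bounds
  obtain ⟨δ₀, hδ₀pos, hball⟩ : ∃ δ₀ > 0, closedBall y δ₀ ⊆ U := by
    obtain ⟨ε, hε, h⟩ := Metric.isOpen_iff.1 hU y hy
    exact ⟨ε / 2, by linarith, (closedBall_subset_ball (by linarith)).trans h⟩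
  obtain ⟨R, hR⟩ : ∃ R, ∀ c ∈ C, ‖c‖ ≤ R := by
    obtain ⟨r, hr⟩ := hCcp.isBounded.subset_closedBall 0
    exact ⟨r, fun c hc => mem_closedBall_zero_iff.1 (hr hc)⟩
  have hR0 : 0 ≤ R := le_trans (norm_nonneg _) (hR _ hCne.choose_spec)
  obtain ⟨B, hB⟩ : ∃ B, ∀ ξ ∈ closedBall y δ₀, ‖f'' ξ‖ ≤ B :=
    (isCompact_closedBall y δ₀).exists_bound_of_continuousOn (hf''cont.mono hball)
  have hB0 : 0 ≤ B := le_trans (norm_nonneg _) (hB y (mem_closedBall_self hδ₀pos.le))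
  set K : ℝ := B * (‖y‖ + δ₀ + R) with hK
  have hK0 : 0 ≤ K := by positivity
  have hξc : ∀ c ∈ C, ∀ ξ ∈ closedBall y δ₀, ‖ξ - c‖ ≤ ‖y‖ + δ₀ + R := by
    intro c hc ξ hξ
    have h2 := mem_closedBall_iff_norm.1 hξ
    have h1 : ‖ξ‖ ≤ ‖y‖ + δ₀ := by
      calc ‖ξ‖ = ‖y + (ξ - y)‖ := by congr 1; abel
        _ ≤ ‖y‖ + ‖ξ - y‖ := norm_add_le _ _
        _ ≤ ‖y‖ + δ₀ := by linarith
    calc ‖ξ - c‖ ≤ ‖ξ‖ + ‖c‖ := norm_sub_le _ _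
      _ ≤ ‖y‖ + δ₀ + R := by linarith [hR c hc]
  have hnormbd : ∀ c ∈ C, ∀ ξ ∈ closedBall y δ₀, ‖f'' ξ (ξ - c)‖ ≤ K := by
    intro c hc ξ hξ
    calc ‖f'' ξ (ξ - c)‖ ≤ ‖f'' ξ‖ * ‖ξ - c‖ := (f'' ξ).le_opNorm _
      _ ≤ B * (‖y‖ + δ₀ + R) :=
          mul_le_mul (hB ξ hξ) (hξc c hc ξ hξ) (norm_nonneg _) hB0
  -- ### Step E: Lipschitz estimates
  have hlip : ∀ c ∈ C, ∀ a ∈ closedBall y δ₀, ∀ b ∈ closedBall y δ₀,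
      ‖bregman f f' c b - bregman f f' c a‖ ≤ K * ‖b - a‖ := by
    intro c hc a ha b hb
    apply Convex.norm_image_sub_le_of_norm_hasFDerivWithin_le
      (f' := fun ξ => innerSL ℝ (f'' ξ (ξ - c)))
      (fun ξ hξ => ((hder c ξ (hball hξ))).hasFDerivWithinAt) ?_
      (convex_closedBall y δ₀) ha hb
    intro ξ hξ
    rw [innerSL_apply_norm]
    exact hnormbd c hc ξ hξ
  have hsupLip : ∀ D : Set (Esp J), D ⊆ C → D.Nonempty →
      ∀ a ∈ closedBall y δ₀, ∀ b ∈ closedBall y δ₀,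
      sSup ((fun c => bregman f f' c b) '' D) ≤ sSup ((fun c => bregman f f' c a) '' D)
        + K * ‖b - a‖ := by
    intro D hDC hDne a ha b hb
    apply csSup_le (hDne.image _)
    rintro x ⟨c, hc, rfl⟩
    have h1 := hlip c (hDC hc) a ha b hb
    have h2 : bregman f f' c a ≤ sSup ((fun c => bregman f f' c a) '' D) :=
      le_csSup (((hbdd a (hball ha)).mono (Set.image_mono hDC))) ⟨c, hc, rfl⟩
    have := (le_abs_self (bregman f f' c b - bregman f f' c a)).trans h1
    linarith
  -- ### Step F: uniform derivative estimate
  have key : ∀ ε > (0:ℝ), ∃ δ > 0, δ ≤ δ₀ ∧ ∀ c ∈ C, ∀ a ∈ closedBall y δ, ∀ b ∈ closedBall y δ,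
      ‖bregman f f' c b - bregman f f' c a - ⟪f'' y (y - c), b - a⟫‖ ≤ ε * ‖b - a‖ := by
    intro ε hε
    set S : ℝ := ‖y‖ + δ₀ + R + ‖f'' y‖ + 1 with hS
    have hSpos : 0 < S := by
      have := norm_nonneg (f'' y); have := norm_nonneg y
      simp only [hS]; linarith
    have hcts : ContinuousAt f'' y := hf''cont.continuousAt (hU.mem_nhds hy)
    have h1 : ∀ᶠ ξ in nhds y, ‖f'' ξ - f'' y‖ < ε / (2 * S) := by
      have h0 := Metric.tendsto_nhds.1 hcts (ε / (2 * S)) (div_pos hε (by linarith))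
      refine h0.mono fun ξ hξ => ?_
      rwa [dist_eq_norm] at hξ
    obtain ⟨δ₁, hδ₁pos, hδ₁⟩ := Metric.eventually_nhds_iff_ball.1 h1
    set δ : ℝ := min δ₀ (min (δ₁ / 2) (ε / (2 * S))) with hδ
    have hδpos : 0 < δ := by
      apply lt_min hδ₀pos (lt_min (by linarith) (div_pos hε (by linarith)))
    have hδδ₀ : δ ≤ δ₀ := min_le_left _ _
    have hsub : closedBall y δ ⊆ closedBall y δ₀ := closedBall_subset_closedBall hδδ₀
    refine ⟨δ, hδpos, hδδ₀, ?_⟩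
    intro c hc a ha b hb
    have hbound : ∀ ξ ∈ closedBall y δ, ‖f'' ξ (ξ - c) - f'' y (y - c)‖ ≤ ε := by
      intro ξ hξ
      have hξ₀ : ξ ∈ closedBall y δ₀ := hsub hξ
      have hξball : ξ ∈ ball y δ₁ := by
        have := mem_closedBall.1 hξ
        exact mem_ball.2 (lt_of_le_of_lt (this.trans (min_le_of_right_le (min_le_left _ _)))
          (by linarith))
      have e1 : f'' ξ (ξ - c) - f'' y (y - c) = (f'' ξ - f'' y) (ξ - c) + f'' y (ξ - y) := by
        simp only [ContinuousLinearMap.sub_apply, map_sub]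
        abel
      rw [e1]
      have h2 : ‖(f'' ξ - f'' y) (ξ - c)‖ ≤ ε / (2 * S) * (‖y‖ + δ₀ + R) := by
        calc ‖(f'' ξ - f'' y) (ξ - c)‖ ≤ ‖f'' ξ - f'' y‖ * ‖ξ - c‖ :=
              (f'' ξ - f'' y).le_opNorm _
          _ ≤ ε / (2 * S) * (‖y‖ + δ₀ + R) := by
              apply mul_le_mul (hδ₁ ξ hξball).le (hξc c hc ξ hξ₀) (norm_nonneg _)
                (le_of_lt (div_pos hε (by linarith)))
      have h3 : ‖f'' y (ξ - y)‖ ≤ ‖f'' y‖ * δ := by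
        calc ‖f'' y (ξ - y)‖ ≤ ‖f'' y‖ * ‖ξ - y‖ := (f'' y).le_opNorm _
          _ ≤ ‖f'' y‖ * δ := by
              apply mul_le_mul_of_nonneg_left (mem_closedBall_iff_norm.1 hξ) (norm_nonneg _)
      have h4 : ε / (2 * S) * (‖y‖ + δ₀ + R) ≤ ε / 2 := by
        have hle : ‖y‖ + δ₀ + R ≤ S := by simp only [hS]; linarith [norm_nonneg (f'' y)]
        calc ε / (2 * S) * (‖y‖ + δ₀ + R) ≤ ε / (2 * S) * S :=
              mul_le_mul_of_nonneg_left hle (le_of_lt (div_pos hε (by linarith)))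
          _ = ε / 2 := by field_simp
      have h5 : ‖f'' y‖ * δ ≤ ε / 2 := by
        have hδ2 : δ ≤ ε / (2 * S) := (min_le_right _ _).trans (min_le_right _ _)
        have h6 : ‖f'' y‖ ≤ S := by simp only [hS]; linarith [norm_nonneg y]
        calc ‖f'' y‖ * δ ≤ S * (ε / (2 * S)) :=
              mul_le_mul h6 hδ2 hδpos.le hSpos.le
          _ = ε / 2 := by field_simp
      calc ‖(f'' ξ - f'' y) (ξ - c) + f'' y (ξ - y)‖
          ≤ ‖(f'' ξ - f'' y) (ξ - c)‖ + ‖f'' y (ξ - y)‖ := norm_add_le _ _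
        _ ≤ ε / 2 + ε / 2 := add_le_add (h2.trans h4) (h3.trans h5)
        _ = ε := by ring
    have hG : ∀ ξ ∈ closedBall y δ,
        HasFDerivWithinAt (fun z => bregman f f' c z - ⟪f'' y (y - c), z⟫)
          (innerSL ℝ (f'' ξ (ξ - c) - f'' y (y - c))) (closedBall y δ) ξ := by
      intro ξ hξ
      have h1 := hder c ξ (hball (hsub hξ))
      have h2 : HasFDerivAt (fun z : Esp J => (⟪f'' y (y - c), z⟫ : ℝ))
          (innerSL ℝ (f'' y (y - c))) ξ := (innerSL ℝ (f'' y (y - c))).hasFDerivAt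
      have h3 := h1.sub h2
      have he : innerSL ℝ (f'' ξ (ξ - c)) - innerSL ℝ (f'' y (y - c))
          = innerSL ℝ (f'' ξ (ξ - c) - f'' y (y - c)) := (map_sub (innerSL ℝ) _ _).symm
      rw [he] at h3
      exact h3.hasFDerivWithinAt
    have hmvt := Convex.norm_image_sub_le_of_norm_hasFDerivWithin_le hG
      (fun ξ hξ => by rw [innerSL_apply_norm]; exact hbound ξ hξ)
      (convex_closedBall y δ) ha hb
    have he2 : bregman f f' c b - ⟪f'' y (y - c), b⟫ - (bregman f f' c a - ⟪f'' y (y - c), a⟫)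
        = bregman f f' c b - bregman f f' c a - ⟪f'' y (y - c), b - a⟫ := by
      rw [inner_sub_right]; ring
    rwa [he2] at hmvt
  -- ### Step G: the farthest set at `y` is compact and the max is attained
  have hQcp : IsCompact (farthestSet f f' C y) := by
    have hQeq : farthestSet f f' C y = C ∩ (fun c => bregman f f' c y) ⁻¹' (Set.Ici (g y)) := by
      ext c
      constructor
      · rintro ⟨hcC, hcmax⟩
        refine ⟨hcC, ?_⟩
        simp only [Set.mem_preimage, Set.mem_Ici]
        exact (hQg y hy c ⟨hcC, hcmax⟩).le
      · rintro ⟨hcC, hcle⟩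
        simp only [Set.mem_preimage, Set.mem_Ici] at hcle
        exact ⟨hcC, fun d hd => (hle_g y hy d hd).trans hcle⟩
    rw [hQeq]
    exact hCcp.of_isClosed_subset
      ((hφcont y hy).preimage_isClosed_of_isClosed hCcp.isClosed isClosed_Ici)
      Set.inter_subset_left
  have hQneY : (farthestSet f f' C y).Nonempty := hQne y hy
  have hQsubC : farthestSet f f' C y ⊆ C := fun c hc => hc.1
  -- the directional max
  have hMw : ∀ w : Esp J, ∃ x₀ ∈ farthestSet f f' C y,
      sSup ((fun x => ⟪f'' y (y - x), w⟫) '' farthestSet f f' C y) = ⟪f'' y (y - x₀), w⟫ ∧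
      ∀ x ∈ farthestSet f f' C y, ⟪f'' y (y - x), w⟫ ≤ ⟪f'' y (y - x₀), w⟫ := by
    intro w
    have hcont : Continuous (fun x : Esp J => ⟪f'' y (y - x), w⟫) :=
      (((f'' y).continuous.comp (continuous_const.sub continuous_id)).inner continuous_const)
    obtain ⟨x₀, hx₀Q, hmax⟩ := hQcp.exists_isMaxOn hQneY hcont.continuousOn
    refine ⟨x₀, hx₀Q, le_antisymm (csSup_le (hQneY.image _) ?_) (le_csSup ?_ ⟨x₀, hx₀Q, rfl⟩),
      fun x hx => hmax hx⟩
    · rintro x ⟨c, hc, rfl⟩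
      exact hmax hc
    · exact ((hQcp.image hcont)).bddAbove
  -- ### Step H: main eventual bounds (for fixed w and ε)
  have mainEV : ∀ w : Esp J, ∀ ε > (0:ℝ),
      (∀ᶠ p in (nhds y) ×ˢ (nhdsWithin (0:ℝ) (Set.Ioi 0)),
        (g (p.1 + p.2 • w) - g p.1) / p.2 ≤
          sSup ((fun x => ⟪f'' y (y - x), w⟫) '' farthestSet f f' C y) + ε) := by
    intro w ε hε
    set M := sSup ((fun x => ⟪f'' y (y - x), w⟫) '' farthestSet f f' C y) with hM
    set ψ : Esp J → ℝ := fun c => ⟪f'' y (y - c), w⟫ with hψ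
    have hψcont : Continuous ψ :=
      ((f'' y).continuous.comp (continuous_const.sub continuous_id)).inner continuous_const
    -- upper semicontinuity of the farthest set
    have hV : ∃ ρ > 0, ρ ≤ δ₀ ∧ ∀ z ∈ closedBall y ρ, ∀ c ∈ farthestSet f f' C z,
        ψ c < M + ε / 2 := by
      set V : Set (Esp J) := {c | ψ c < M + ε / 2} with hVdef
      have hQV : ∀ c ∈ farthestSet f f' C y, c ∈ V := by
        intro c hc
        obtain ⟨x₀, hx₀Q, hMeq, hMmax⟩ := hMw w
        have : ψ c ≤ M := by rw [hM, hMeq]; exact hMmax c hc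
        simp only [hVdef, Set.mem_setOf_eq]
        linarith
      by_cases hDV : (C \ V).Nonempty
      · have hVopen : IsOpen V := isOpen_lt hψcont continuous_const
        have hCV : IsCompact (C \ V) := hCcp.diff hVopen
        set m : Esp J → ℝ := fun z => sSup ((fun c => bregman f f' c z) '' (C \ V)) with hm
        have hmbdd : ∀ z ∈ U, BddAbove ((fun c => bregman f f' c z) '' (C \ V)) :=
          fun z hz => (hbdd z hz).mono (Set.image_mono Set.diff_subset)
        have hmy : m y < g y := by
          obtain ⟨e, heCV, hemax⟩ := hCV.exists_isMaxOn hDV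
            ((hφcont y hy).mono Set.diff_subset)
          have h1 : m y = bregman f f' e y := by
            refine le_antisymm (csSup_le (hDV.image _) ?_) (le_csSup (hmbdd y hy) ⟨e, heCV, rfl⟩)
            rintro x ⟨d, hd, rfl⟩
            exact hemax hd
          have hne : bregman f f' e y ≠ g y := by
            intro hEq
            apply heCV.2
            apply hQV
            exact ⟨heCV.1, fun d hd => (hle_g y hy d hd).trans hEq.ge⟩
          rw [h1]
          exact lt_of_le_of_ne (hle_g y hy e heCV.1) hne
        set ρ : ℝ := min δ₀ ((g y - m y) / (2 * K + 2)) with hρ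
        have hρpos : 0 < ρ := lt_min hδ₀pos (by apply div_pos <;> linarith)
        have hρδ₀ : ρ ≤ δ₀ := min_le_left _ _
        refine ⟨ρ, hρpos, hρδ₀, ?_⟩
        intro z hz c hcQ
        by_contra hcV
        have hzδ₀ : z ∈ closedBall y δ₀ := closedBall_subset_closedBall hρδ₀ hz
        have hzU : z ∈ U := hball hzδ₀
        have hcCV : c ∈ C \ V := ⟨hcQ.1, hcV⟩
        have h1 : bregman f f' c z ≤ m z := le_csSup (hmbdd z hzU) ⟨c, hcCV, rfl⟩
        have h2 : m z ≤ m y + K * ‖z - y‖ :=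
          hsupLip (C \ V) Set.diff_subset hDV y (mem_closedBall_self hδ₀pos.le) z hzδ₀
        have h3 : g y ≤ g z + K * ‖y - z‖ :=
          hsupLip C subset_rfl hCne z hzδ₀ y (mem_closedBall_self hδ₀pos.le)
        have h4 : ‖z - y‖ ≤ ρ := mem_closedBall_iff_norm.1 hz
        have h5 : g z = bregman f f' c z := hQg z hzU c hcQ
        have h6 : K * ‖z - y‖ ≤ K * ρ := mul_le_mul_of_nonneg_left h4 hK0
        have h7 : (2 * K + 2) * ρ ≤ g y - m y := by
          have hle2 : ρ ≤ (g y - m y) / (2 * K + 2) := min_le_right _ _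
          calc (2 * K + 2) * ρ ≤ (2 * K + 2) * ((g y - m y) / (2 * K + 2)) :=
                mul_le_mul_of_nonneg_left hle2 (by linarith)
            _ = g y - m y := by field_simp
        have h6b : K * ‖y - z‖ ≤ K * ρ := by rw [norm_sub_rev y z]; exact h6
        linarith
      · push_neg at hDV
        refine ⟨δ₀, hδ₀pos, le_refl _, ?_⟩
        intro z hz c hcQ
        have hcV : c ∈ V := by
          by_contra hcV
          exact absurd (Set.eq_empty_iff_forall_notMem.1 hDV c) (by simp [hcQ.1, hcV])
        exact hcV
    obtain ⟨ρ, hρpos, hρδ₀, hVprop⟩ := hV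
    obtain ⟨δ, hδpos, hδδ₀, hkey⟩ := key (ε / (2 * (‖w‖ + 1)))
      (by positivity)
    set r : ℝ := min δ ρ with hr
    have hrpos : 0 < r := lt_min hδpos hρpos
    have hwpos : (0:ℝ) < ‖w‖ + 1 := by positivity
    have h1 : ∀ᶠ x in nhds y, x ∈ ball y (r / 2) :=
      eventually_of_mem (Metric.ball_mem_nhds y (by linarith)) fun x hx => hx
    have h2 : ∀ᶠ t in nhdsWithin (0:ℝ) (Set.Ioi 0), t ∈ Set.Ioo 0 (r / (2 * (‖w‖ + 1))) :=
      eventually_of_mem (Ioo_mem_nhdsGT_of_mem ⟨le_refl 0, by positivity⟩) fun t ht => ht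
    filter_upwards [h1.prod_mk h2] with p hp
    obtain ⟨hx, ht⟩ := hp
    set x := p.1
    set t := p.2
    set b := x + t • w with hb
    have ht0 : 0 < t := ht.1
    have htw : t * ‖w‖ ≤ r / 2 := by
      have h3 : t * ‖w‖ ≤ (r / (2 * (‖w‖ + 1))) * ‖w‖ :=
        mul_le_mul_of_nonneg_right ht.2.le (norm_nonneg _)
      have h4 : (r / (2 * (‖w‖ + 1))) * ‖w‖ ≤ r / 2 := by
        rw [div_mul_eq_mul_div, div_le_div_iff₀ (by positivity) (by norm_num)]
        nlinarith [norm_nonneg w]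
      linarith
    have hxr : x ∈ closedBall y r := by
      have := mem_ball_iff_norm.1 hx
      exact mem_closedBall_iff_norm.2 (by linarith)
    have hbr : b ∈ closedBall y r := by
      apply mem_closedBall_iff_norm.2
      calc ‖b - y‖ = ‖(x - y) + t • w‖ := by rw [hb]; congr 1; abel
        _ ≤ ‖x - y‖ + ‖t • w‖ := norm_add_le _ _
        _ ≤ r / 2 + t * ‖w‖ := by
            have := mem_ball_iff_norm.1 hx
            have hnorm : ‖t • w‖ = t * ‖w‖ := by
              rw [norm_smul, Real.norm_eq_abs, abs_of_pos ht0]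
            linarith [hnorm.le]
        _ ≤ r := by linarith
    have hxδ : x ∈ closedBall y δ := closedBall_subset_closedBall (min_le_left _ _) hxr
    have hbδ : b ∈ closedBall y δ := closedBall_subset_closedBall (min_le_left _ _) hbr
    have hbρ : b ∈ closedBall y ρ := closedBall_subset_closedBall (min_le_right _ _) hbr
    have hxU : x ∈ U := hball (closedBall_subset_closedBall hδδ₀ hxδ)
    have hbU : b ∈ U := hball (closedBall_subset_closedBall hδδ₀ hbδ)
    obtain ⟨c, hcQb⟩ := hQne b hbU
    have hgb : g b = bregman f f' c b := hQg b hbU c hcQb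
    have hφxa : bregman f f' c x ≤ g x := hle_g x hxU c hcQb.1
    have hkey' := hkey c hcQb.1 x hxδ b hbδ
    have hbx : b - x = t • w := by rw [hb]; abel
    rw [hbx] at hkey'
    have hinner : ⟪f'' y (y - c), t • w⟫ = t * ψ c := real_inner_smul_right _ _ _
    have hnorm : ‖t • w‖ = t * ‖w‖ := by
      rw [norm_smul, Real.norm_eq_abs, abs_of_pos ht0]
    rw [hinner, hnorm] at hkey'
    have hψc : ψ c < M + ε / 2 := hVprop b hbρ c hcQb
    have hew : ε / (2 * (‖w‖ + 1)) * (t * ‖w‖) ≤ t * (ε / 2) := by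
      rw [div_mul_eq_mul_div, div_le_iff₀ (by positivity)]
      nlinarith [mul_nonneg (mul_nonneg hε.le ht0.le) (norm_nonneg w),
        mul_nonneg hε.le ht0.le]
    rw [Real.norm_eq_abs] at hkey'
    have habs := (le_abs_self _).trans hkey'
    have hfinal : g b - g x ≤ t * (M + ε) := by
      have : bregman f f' c b - bregman f f' c x ≤ t * ψ c + t * (ε / 2) := by linarith
      calc g b - g x ≤ bregman f f' c b - bregman f f' c x := by linarith [hgb.le, hφxa]
        _ ≤ t * ψ c + t * (ε / 2) := this
        _ ≤ t * (M + ε) := by nlinarith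
    rw [div_le_iff₀ ht0]
    calc g b - g x ≤ t * (M + ε) := hfinal
      _ = (M + ε) * t := by ring
  have mainLO : ∀ w : Esp J, ∀ ε > (0:ℝ),
      (∀ᶠ t in nhdsWithin (0:ℝ) (Set.Ioi 0),
        sSup ((fun x => ⟪f'' y (y - x), w⟫) '' farthestSet f f' C y) - ε ≤
          (g (y + t • w) - g y) / t) := by
    intro w ε hε
    set M := sSup ((fun x => ⟪f'' y (y - x), w⟫) '' farthestSet f f' C y) with hM
    obtain ⟨x₀, hx₀Q, hMeq, hMmax⟩ := hMw w
    obtain ⟨δ, hδpos, hδδ₀, hkey⟩ := key (ε / (‖w‖ + 1)) (by positivity)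
    have h2 : ∀ᶠ t in nhdsWithin (0:ℝ) (Set.Ioi 0), t ∈ Set.Ioo 0 (δ / (‖w‖ + 1)) :=
      eventually_of_mem (Ioo_mem_nhdsGT_of_mem ⟨le_refl 0, by positivity⟩) fun t ht => ht
    filter_upwards [h2] with t ht
    have ht0 : 0 < t := ht.1
    set b := y + t • w with hb
    have hnorm : ‖t • w‖ = t * ‖w‖ := by
      rw [norm_smul, Real.norm_eq_abs, abs_of_pos ht0]
    have hbδ : b ∈ closedBall y δ := by
      apply mem_closedBall_iff_norm.2
      have h3 : t * ‖w‖ ≤ δ := by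
        have h4 : t * ‖w‖ ≤ (δ / (‖w‖ + 1)) * ‖w‖ :=
          mul_le_mul_of_nonneg_right ht.2.le (norm_nonneg _)
        have h5 : (δ / (‖w‖ + 1)) * ‖w‖ ≤ δ := by
          rw [div_mul_eq_mul_div, div_le_iff₀ (by positivity)]
          nlinarith [norm_nonneg w]
        linarith
      calc ‖b - y‖ = ‖t • w‖ := by rw [hb]; congr 1; abel
        _ ≤ δ := by linarith [hnorm.le]
    have hyδ : y ∈ closedBall y δ := mem_closedBall_self hδpos.le
    have hbU : b ∈ U := hball (closedBall_subset_closedBall hδδ₀ hbδ)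
    have hgy : g y = bregman f f' x₀ y := hQg y hy x₀ hx₀Q
    have hgb : bregman f f' x₀ b ≤ g b := hle_g b hbU x₀ hx₀Q.1
    have hkey' := hkey x₀ hx₀Q.1 y hyδ b hbδ
    have hbx : b - y = t • w := by rw [hb]; abel
    rw [hbx] at hkey'
    have hinner : ⟪f'' y (y - x₀), t • w⟫ = t * ⟪f'' y (y - x₀), w⟫ :=
      real_inner_smul_right _ _ _
    rw [hinner, hnorm] at hkey'
    rw [Real.norm_eq_abs] at hkey'
    have habs := (abs_le.1 hkey').1
    have hMx : M = ⟪f'' y (y - x₀), w⟫ := by rw [hM]; exact hMeq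
    have hεw : ε / (‖w‖ + 1) * (t * ‖w‖) ≤ t * ε := by
      rw [div_mul_eq_mul_div, div_le_iff₀ (by positivity)]
      nlinarith [norm_nonneg w]
    rw [le_div_iff₀ ht0, hMx]
    have hc1 : bregman f f' x₀ b - bregman f f' x₀ y ≥ t * ⟪f'' y (y - x₀), w⟫ - t * ε := by
      have p1 : bregman f f' x₀ b - bregman f f' x₀ y ≥
          t * ⟪f'' y (y - x₀), w⟫ - ε / (‖w‖ + 1) * (t * ‖w‖) := by linarith [habs]
      exact le_trans (sub_le_sub_left hεw _) p1
    have hc2 : g b - g y ≥ t * ⟪f'' y (y - x₀), w⟫ - t * ε := by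
      linarith [hgy.le, hgy.ge, hgb]
    nlinarith [hc2]
  -- ### Step I: compute the derivatives
  have hmain : ∀ w : Esp J,
      diniDeriv g y w = sSup ((fun x => ⟪f'' y (y - x), w⟫) '' farthestSet f f' C y) ∧
      clarkeDeriv g y w = sSup ((fun x => ⟪f'' y (y - x), w⟫) '' farthestSet f f' C y) := by
    intro w
    have EV := mainEV w
    have LO := mainLO w
    set M := sSup ((fun x => ⟪f'' y (y - x), w⟫) '' farthestSet f f' C y) with hM
    haveI hNB : ((nhds y) ×ˢ (nhdsWithin (0:ℝ) (Set.Ioi 0))).NeBot :=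
      Filter.prod_neBot.2 ⟨inferInstance, inferInstance⟩
    have hemb : Tendsto (fun t : ℝ => ((y : Esp J), t)) (nhdsWithin 0 (Set.Ioi 0))
        ((nhds y) ×ˢ (nhdsWithin 0 (Set.Ioi 0))) :=
      Tendsto.prodMk tendsto_const_nhds Filter.tendsto_id
    have EVd : ∀ ε > (0:ℝ), ∀ᶠ t in nhdsWithin (0:ℝ) (Set.Ioi 0),
        (g (y + t • w) - g y) / t ≤ M + ε := fun ε hε => hemb.eventually (EV ε hε)
    constructor
    · -- Dini derivative
      rw [diniDeriv]
      apply le_antisymm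
      · apply myle_of_forall_pos
        intro ε hε
        exact Filter.liminf_le_of_frequently_le ((EVd ε hε).frequently)
          ⟨M - 1, Filter.eventually_map.2 ((LO 1 one_pos).mono fun t h => h)⟩
      · apply myle_of_forall_pos
        intro ε hε
        have h1 : M - ε ≤ Filter.liminf
            (fun t : ℝ => (g (y + t • w) - g y) / t) (nhdsWithin 0 (Set.Ioi 0)) :=
          Filter.le_liminf_of_le
            (Filter.isCoboundedUnder_ge_of_eventually_le _ (EVd 1 one_pos)) (LO ε hε)
        linarith
    · -- Clarke derivative
      rw [clarkeDeriv]
      apply le_antisymm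
      · apply myle_of_forall_pos
        intro ε hε
        exact Filter.limsup_le_of_le
          (Filter.IsCoboundedUnder.of_frequently_ge
            (hemb.frequently ((LO 1 one_pos).frequently)))
          (EV ε hε)
      · apply myle_of_forall_pos
        intro ε hε
        have h1 : M - ε ≤ Filter.limsup
            (fun p : Esp J × ℝ => (g (p.1 + p.2 • w) - g p.1) / p.2)
            ((nhds y) ×ˢ (nhdsWithin 0 (Set.Ioi 0))) :=
          Filter.le_limsup_of_frequently_le (hemb.frequently ((LO ε hε).frequently))
            ⟨M + 1, Filter.eventually_map.2 (EV 1 one_pos)⟩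
        linarith
  refine ⟨fun w => (hmain w).1, fun w => (hmain w).2, ?_⟩
  -- ### Step J: the subdifferential
  have hKcp : IsCompact ((fun x => f'' y (y - x)) '' farthestSet f f' C y) :=
    hQcp.image ((f'' y).continuous.comp (continuous_const.sub continuous_id))
  have hKne : ((fun x => f'' y (y - x)) '' farthestSet f f' C y).Nonempty := hQneY.image _
  have hLHS : {s : Esp J | ∀ w, ⟪s, w⟫ ≤ clarkeDeriv g y w} =
      {s : Esp J | ∀ w, ⟪s, w⟫ ≤
        sSup ((fun k => ⟪k, w⟫) '' ((fun x => f'' y (y - x)) '' farthestSet f f' C y))} := by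
    ext s
    simp only [Set.mem_setOf_eq]
    refine forall_congr' fun w => ?_
    rw [(hmain w).2, Set.image_image]
  rw [hLHS, mySupport_eq_hull hKcp hKne]
  set A : Esp J →ᵃ[ℝ] Esp J := AffineMap.mk' (fun x => f'' y (y - x))
    (-(f'' y).toLinearMap) 0 (by
      intro p
      simp only [LinearMap.neg_apply, ContinuousLinearMap.coe_coe, vsub_eq_sub, sub_zero,
        vadd_eq_add, map_sub]
      abel) with hA
  have himg : ∀ S : Set (Esp J), (fun x => f'' y (y - x)) '' S = A '' S := by
    intro S
    rfl
  rw [himg, himg]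
  exact (A.image_convexHull _).symm
end

section
/- Suppose f is twice continuously differentiable on U with ∇²f(y) positive definite for all y ∈ U. Then the farthest-distance function g := sup_{c∈C} D_f(c,·) is differentiable at y ∈ U if and only if the farthest-point set Q_C(y) is a singleton. -/
open scoped RealInnerProductSpace

/-- Derivative of `z ↦ D_f(c, z)` at `y`. -/
lemma bregman_hasFDerivAt {J : ℕ} {f : EuclideanSpace ℝ (Fin J) → ℝ}
    {f' : EuclideanSpace ℝ (Fin J) → EuclideanSpace ℝ (Fin J)}
    {A : EuclideanSpace ℝ (Fin J) →L[ℝ] EuclideanSpace ℝ (Fin J)}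
    {y : EuclideanSpace ℝ (Fin J)}
    (h1 : HasGradientAt f (f' y) y) (h2 : HasFDerivAt f' A y) (c : EuclideanSpace ℝ (Fin J)) :
    HasFDerivAt (fun z => bregman f f' c z)
      (-((innerSL ℝ (c - y)).comp A)) y := by
  have hg : HasFDerivAt (fun z : EuclideanSpace ℝ (Fin J) => c - z)
      (-(ContinuousLinearMap.id ℝ _)) y := (hasFDerivAt_id y).const_sub c
  have hA := h2.inner ℝ hg
  have hf := h1.hasFDerivAt.const_sub (f c)
  have := hf.sub hA
  refine HasFDerivAt.congr_fderiv (f := fun z => bregman f f' c z) this ?_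
  ext h
  simp [fderivInnerCLM_apply, InnerProductSpace.toDual_apply_apply, inner_sub_left, inner_sub_right,
    real_inner_comm, inner_neg_right, inner_neg_left]

set_option maxHeartbeats 1600000 in
/-- If `f` is twice continuously differentiable with positive definite Hessians, then the
farthest-distance function is differentiable at `y ∈ U` iff `Q_C(y)` is a singleton. -/
theorem farthest_distance_differentiable_iff_unique_farthest {J : ℕ}
    (f : EuclideanSpace ℝ (Fin J) → ℝ) (U : Set (EuclideanSpace ℝ (Fin J)))
    (hU : IsOpen U) (hUne : U.Nonempty)
    (hconv : StrictConvexOn ℝ U f)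
    (f' : EuclideanSpace ℝ (Fin J) → EuclideanSpace ℝ (Fin J))
    (hf' : ∀ y ∈ U, HasGradientAt f (f' y) y)
    (hcoer : Filter.Tendsto (fun x : EuclideanSpace ℝ (Fin J) => f x / ‖x‖)
      (Filter.comap norm Filter.atTop) Filter.atTop)
    (f'' : EuclideanSpace ℝ (Fin J) → EuclideanSpace ℝ (Fin J) →L[ℝ] EuclideanSpace ℝ (Fin J))
    (hf'' : ∀ y ∈ U, HasFDerivAt f' (f'' y) y)
    (hf''cont : ContinuousOn f'' U)
    -- positive definiteness of the Hessians
    (hpos : ∀ y ∈ U, ∀ v : EuclideanSpace ℝ (Fin J), v ≠ 0 → 0 < ⟪f'' y v, v⟫)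
    (C : Set (EuclideanSpace ℝ (Fin J))) (hCne : C.Nonempty)
    (hCcp : IsCompact C) (hCU : C ⊆ U)
    (y : EuclideanSpace ℝ (Fin J)) (hy : y ∈ U) :
    DifferentiableAt ℝ (fun z => sSup ((fun c => bregman f f' c z) '' C)) y ↔
      ∃ x, farthestSet f f' C y = {x} := by
  set g : EuclideanSpace ℝ (Fin J) → ℝ :=
    fun z => sSup ((fun c => bregman f f' c z) '' C) with hgdef
  clear_value g
  -- continuity facts
  have hfc : ∀ u ∈ U, ContinuousAt f u := fun u hu =>
    (hf' u hu).hasFDerivAt.differentiableAt.continuousAt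
  have hf'c : ContinuousAt f' y := (hf'' y hy).differentiableAt.continuousAt
  have hContC : ∀ z, ContinuousOn (fun c => bregman f f' c z) C := by
    intro z
    have h1 : ContinuousOn f C := fun c hc => (hfc c (hCU hc)).continuousWithinAt
    have h2 : Continuous fun c : EuclideanSpace ℝ (Fin J) => (⟪f' z, c - z⟫ : ℝ) :=
      continuous_const.inner (continuous_id.sub continuous_const)
    exact (h1.sub continuousOn_const).sub h2.continuousOn
  -- maximizer selection
  have hsel : ∀ z, ∃ c, c ∈ C ∧ ∀ d ∈ C, bregman f f' d z ≤ bregman f f' c z := by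
    intro z
    obtain ⟨c, hc, hmax⟩ := hCcp.exists_isMaxOn hCne (hContC z)
    exact ⟨c, hc, fun d hd => hmax hd⟩
  choose σ hσC hσmax using hsel
  have hg : ∀ z, g z = bregman f f' (σ z) z := by
    intro z
    rw [hgdef]
    refine IsGreatest.csSup_eq ⟨Set.mem_image_of_mem _ (hσC z), ?_⟩
    rintro b ⟨d, hd, rfl⟩
    exact hσmax z d hd
  -- the candidate derivatives
  set L : EuclideanSpace ℝ (Fin J) → (EuclideanSpace ℝ (Fin J) →L[ℝ] ℝ) :=
    fun c => -((innerSL ℝ (c - y)).comp (f'' y)) with hL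
  clear_value L
  have hφ : ∀ c, HasFDerivAt (fun z => bregman f f' c z) (L c) y := by
    intro c
    rw [hL]
    exact bregman_hasFDerivAt (hf' y hy) (hf'' y hy) c
  constructor
  · -- differentiable → unique farthest point
    intro hdiff
    refine ⟨σ y, ?_⟩
    have hkey : ∀ c, c ∈ C → (∀ d ∈ C, bregman f f' d y ≤ bregman f f' c y) →
        fderiv ℝ g y = L c := by
      intro c hcC hcmax
      have hley : bregman f f' c y = g y := by
        rw [hg y]; exact le_antisymm (hσmax y c hcC) (hcmax (σ y) (hσC y))
      have hmax : IsLocalMax (fun z => bregman f f' c z - g z) y := by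
        refine Filter.Eventually.of_forall fun z => ?_
        have h5 : bregman f f' c z ≤ g z := by rw [hg z]; exact hσmax z c hcC
        simp only []
        linarith [hley]
      have h0 := hmax.fderiv_eq_zero
      have hsub : fderiv ℝ (fun z => bregman f f' c z - g z) y = L c - fderiv ℝ g y := by
        rw [fderiv_fun_sub (hφ c).differentiableAt hdiff, (hφ c).fderiv]
      rw [hsub] at h0
      exact (sub_eq_zero.mp h0).symm
    apply Set.eq_singleton_iff_unique_mem.mpr
    refine ⟨⟨hσC y, hσmax y⟩, ?_⟩
    rintro x ⟨hxC, hxmax⟩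
    by_contra hne
    have hv : x - σ y ≠ 0 := sub_ne_zero.mpr hne
    have hLeq : L x = L (σ y) := by rw [← hkey x hxC hxmax, ← hkey (σ y) (hσC y) (hσmax y)]
    have h3 := ContinuousLinearMap.ext_iff.mp hLeq (x - σ y)
    simp only [hL, ContinuousLinearMap.neg_apply, ContinuousLinearMap.comp_apply,
      innerSL_apply_apply] at h3
    have h6 : x - y - (σ y - y) = x - σ y := sub_sub_sub_cancel_right x (σ y) y
    have h5 : ⟪x - σ y, f'' y (x - σ y)⟫ = 0 := by
      have h7 : ⟪x - y - (σ y - y), f'' y (x - σ y)⟫ = 0 := by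
        rw [inner_sub_left]; linarith [h3]
      rwa [h6] at h7
    rw [real_inner_comm] at h5
    exact absurd h5 (ne_of_gt (hpos y hy (x - σ y) hv))
  · -- unique farthest point → differentiable
    rintro ⟨x, hxeq⟩
    have hxmem : x ∈ farthestSet f f' C y := by rw [hxeq]; exact Set.mem_singleton x
    obtain ⟨hxC, hxmax⟩ := hxmem
    have huniq : ∀ c, c ∈ C → (∀ d ∈ C, bregman f f' d y ≤ bregman f f' c y) → c = x := by
      intro c h1 h2
      have hmem : c ∈ farthestSet f f' C y := ⟨h1, h2⟩
      rwa [hxeq, Set.mem_singleton_iff] at hmem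
    have hσy : σ y = x := huniq (σ y) (hσC y) (hσmax y)
    obtain ⟨R, hR⟩ := hCcp.exists_bound_of_continuousOn
      ((continuous_id.sub continuous_const).continuousOn :
        ContinuousOn (fun c : EuclideanSpace ℝ (Fin J) => c - y) C)
    have hR0 : 0 ≤ R := by
      obtain ⟨c0, hc0⟩ := hCne
      exact (norm_nonneg (c0 - y)).trans (hR c0 hc0)
    set K := ‖f'' y‖ with hKdef
    have hK0 : 0 ≤ K := norm_nonneg _
    -- uniform continuity-type bound in the second variable
    have hbnd : ∀ z, ∀ c ∈ C, |bregman f f' c z - bregman f f' c y| ≤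
        |f z - f y| + ‖f' z - f' y‖ * R + ‖f' z‖ * ‖z - y‖ := by
      intro z c hc
      have hid2 : bregman f f' c z - bregman f f' c y
          = (f y - f z) + ⟪f' y - f' z, c - y⟫ + ⟪f' z, z - y⟫ := by
        simp only [bregman, inner_sub_left, inner_sub_right]
        ring
      rw [hid2]
      have t1 : |f y - f z| = |f z - f y| := abs_sub_comm _ _
      have t2 : |⟪f' y - f' z, c - y⟫| ≤ ‖f' z - f' y‖ * R := by
        refine le_trans (abs_real_inner_le_norm _ _) ?_
        rw [norm_sub_rev]
        exact mul_le_mul_of_nonneg_left (hR c hc) (norm_nonneg _)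
      have t3 : |⟪f' z, z - y⟫| ≤ ‖f' z‖ * ‖z - y‖ := abs_real_inner_le_norm _ _
      have u1 := abs_add_le ((f y - f z) + ⟪f' y - f' z, c - y⟫) ⟪f' z, z - y⟫
      have u2 := abs_add_le (f y - f z) ⟪f' y - f' z, c - y⟫
      linarith
    -- convergence of the selected maximizers
    have hσtend : ∀ ε' > (0:ℝ), ∀ᶠ z in nhds y, ‖σ z - x‖ < ε' := by
      intro ε' hε'
      by_cases hK' : (C ∩ {c | ε' ≤ ‖c - x‖}).Nonempty
      · have hKcl : IsClosed {c : EuclideanSpace ℝ (Fin J) | ε' ≤ ‖c - x‖} :=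
          isClosed_le continuous_const (continuous_id.sub continuous_const).norm
        have hKcp : IsCompact (C ∩ {c | ε' ≤ ‖c - x‖}) := hCcp.inter_right hKcl
        obtain ⟨m, hm, hmmax⟩ := hKcp.exists_isMaxOn hK'
          ((hContC y).mono Set.inter_subset_left)
        obtain ⟨hmC, hmfar⟩ := hm
        simp only [Set.mem_setOf_eq] at hmfar
        have hmx : m ≠ x := by
          intro h
          rw [h, sub_self, norm_zero] at hmfar
          exact absurd hmfar (not_le.mpr hε')
        have hlt : bregman f f' m y < bregman f f' x y := by
          rcases lt_or_eq_of_le (hxmax m hmC) with h | h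
          · exact h
          · exact absurd (huniq m hmC (fun d hd => h ▸ hxmax d hd)) hmx
        set δ' := (bregman f f' x y - bregman f f' m y) / 2 with hδ'def
        have hδ'0 : 0 < δ' := by
          rw [hδ'def]
          exact div_pos (sub_pos.mpr hlt) two_pos
        have hω : ContinuousAt
            (fun z => |f z - f y| + ‖f' z - f' y‖ * R + ‖f' z‖ * ‖z - y‖) y := by
          refine ContinuousAt.add (ContinuousAt.add ?_ ?_) ?_
          · exact ((hfc y hy).sub continuousAt_const).abs
          · exact ((hf'c.sub continuousAt_const).norm.mul continuousAt_const)
          · exact hf'c.norm.mul ((continuousAt_id.sub continuousAt_const).norm)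
        have hω0 : |f y - f y| + ‖f' y - f' y‖ * R + ‖f' y‖ * ‖y - y‖ = 0 := by simp
        have hev : ∀ᶠ z in nhds y,
            |f z - f y| + ‖f' z - f' y‖ * R + ‖f' z‖ * ‖z - y‖ < δ' := by
          have ht := hω.tendsto
          rw [hω0] at ht
          exact ht.eventually_lt_const hδ'0
        filter_upwards [hev] with z hz
        by_contra hcon
        push_neg at hcon
        have hσzK : σ z ∈ C ∩ {c | ε' ≤ ‖c - x‖} := ⟨hσC z, hcon⟩
        have c1 := abs_le.mp (hbnd z (σ z) (hσC z))
        have c2 := abs_le.mp (hbnd z x hxC)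
        have d1 : bregman f f' (σ z) y ≤ bregman f f' m y := hmmax hσzK
        have d2 : bregman f f' x z ≤ bregman f f' (σ z) z := hσmax z x hxC
        have hδ'eq : 2 * δ' = bregman f f' x y - bregman f f' m y := by
          simp only [hδ'def]; ring
        linarith [c1.2, c2.1]
      · refine Filter.Eventually.of_forall fun z => ?_
        by_contra hcon
        push_neg at hcon
        exact hK' ⟨σ z, hσC z, hcon⟩
    -- main differentiability argument
    suffices h : HasFDerivAt g (L x) y from h.differentiableAt
    refine HasFDerivAt.of_isLittleO ?_
    rw [Asymptotics.isLittleO_iff]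
    intro ε hε
    have hE1 : ∀ᶠ z in nhds y, |f z - f y - ⟪f' y, z - y⟫| ≤ ε / 4 * ‖z - y‖ := by
      have h3 := Asymptotics.isLittleO_iff.mp (hf' y hy).hasFDerivAt.isLittleO
        (show (0:ℝ) < ε / 4 by positivity)
      filter_upwards [h3] with z hz
      simpa [InnerProductSpace.toDual_apply_apply, Real.norm_eq_abs] using hz
    have hE2 : ∀ᶠ z in nhds y,
        ‖f' z - f' y - f'' y (z - y)‖ ≤ ε / (4 * (R + 1)) * ‖z - y‖ := by
      have h3 := Asymptotics.isLittleO_iff.mp (hf'' y hy).isLittleO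
        (show (0:ℝ) < ε / (4 * (R + 1)) by positivity)
      filter_upwards [h3] with z hz
      simpa using hz
    have hE3 : ∀ᶠ z in nhds y, ‖z - y‖ ≤ min 1 (ε / (4 * (K + 1))) := by
      have hmem := Metric.closedBall_mem_nhds y
        (show (0:ℝ) < min 1 (ε / (4 * (K + 1))) by positivity)
      filter_upwards [hmem] with z hz
      rwa [Metric.mem_closedBall, dist_eq_norm] at hz
    have hE4 := hσtend (ε / (4 * (K + 1))) (by positivity)
    filter_upwards [hE1, hE2, hE3, hE4] with z h1 h2 h3 h4
    have hz1 : ‖z - y‖ ≤ 1 := h3.trans (min_le_left _ _)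
    have hz2 : ‖z - y‖ ≤ ε / (4 * (K + 1)) := h3.trans (min_le_right _ _)
    have hKle : K * (ε / (4 * (K + 1))) ≤ ε / 4 := by
      rw [mul_div_assoc', div_le_div_iff₀ (by positivity) (by norm_num : (0:ℝ) < 4)]
      nlinarith [mul_nonneg hK0 hε.le]
    -- uniform second-order expansion bound
    have hΔ : ∀ c ∈ C, |bregman f f' c z - bregman f f' c y - (L c) (z - y)| ≤
        3 * (ε / 4) * ‖z - y‖ := by
      intro c hc
      have hid : bregman f f' c z - bregman f f' c y - (L c) (z - y)
          = (f y - f z + ⟪f' y, z - y⟫) - ⟪f' z - f' y - f'' y (z - y), c - z⟫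
            + ⟪f'' y (z - y), z - y⟫ := by
        simp only [hL, bregman, ContinuousLinearMap.comp_apply, ContinuousLinearMap.neg_apply,
          innerSL_apply_apply, inner_sub_left, inner_sub_right, map_sub,
          ContinuousLinearMap.sub_apply]
        simp only [real_inner_comm]
        ring
      rw [hid]
      have hb1 : |f y - f z + ⟪f' y, z - y⟫| ≤ ε / 4 * ‖z - y‖ := by
        have heq : f y - f z + ⟪f' y, z - y⟫ = -(f z - f y - ⟪f' y, z - y⟫) := by ring
        rw [heq, abs_neg]
        exact h1
      have hcz : ‖c - z‖ ≤ R + 1 := by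
        have heq : c - z = (c - y) - (z - y) := by abel
        calc ‖c - z‖ = ‖(c - y) - (z - y)‖ := by rw [heq]
          _ ≤ ‖c - y‖ + ‖z - y‖ := norm_sub_le _ _
          _ ≤ R + 1 := add_le_add (hR c hc) hz1
      have hb2 : |⟪f' z - f' y - f'' y (z - y), c - z⟫| ≤ ε / 4 * ‖z - y‖ := by
        refine le_trans (abs_real_inner_le_norm _ _) ?_
        calc ‖f' z - f' y - f'' y (z - y)‖ * ‖c - z‖
            ≤ (ε / (4 * (R + 1)) * ‖z - y‖) * (R + 1) :=
              mul_le_mul h2 hcz (norm_nonneg _) (by positivity)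
          _ = ε / 4 * ‖z - y‖ := by field_simp
      have hb3 : |⟪f'' y (z - y), z - y⟫| ≤ ε / 4 * ‖z - y‖ := by
        refine le_trans (abs_real_inner_le_norm _ _) ?_
        calc ‖f'' y (z - y)‖ * ‖z - y‖ ≤ (K * ‖z - y‖) * ‖z - y‖ :=
              mul_le_mul_of_nonneg_right ((f'' y).le_opNorm _) (norm_nonneg _)
          _ = (K * ‖z - y‖) * ‖z - y‖ := rfl
          _ ≤ (K * (ε / (4 * (K + 1)))) * ‖z - y‖ := by
              have : K * ‖z - y‖ ≤ K * (ε / (4 * (K + 1))) :=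
                mul_le_mul_of_nonneg_left hz2 hK0
              exact mul_le_mul_of_nonneg_right this (norm_nonneg _)
          _ ≤ ε / 4 * ‖z - y‖ := mul_le_mul_of_nonneg_right hKle (norm_nonneg _)
      have u1 := abs_add_le ((f y - f z + ⟪f' y, z - y⟫) - ⟪f' z - f' y - f'' y (z - y), c - z⟫)
        (⟪f'' y (z - y), z - y⟫ : ℝ)
      have u2 := abs_sub (f y - f z + ⟪f' y, z - y⟫)
        (⟪f' z - f' y - f'' y (z - y), c - z⟫ : ℝ)
      linarith
    -- the sandwich
    have hgz : g z = bregman f f' (σ z) z := hg z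
    have hgy : g y = bregman f f' x y := by rw [hg y, hσy]
    have hid3 : (L (σ z)) (z - y) - (L x) (z - y) = -⟪σ z - x, f'' y (z - y)⟫ := by
      simp only [hL, ContinuousLinearMap.comp_apply, ContinuousLinearMap.neg_apply,
        innerSL_apply_apply, inner_sub_left, inner_sub_right, map_sub, ContinuousLinearMap.sub_apply]
      ring
    have hL3 : |⟪σ z - x, f'' y (z - y)⟫| ≤ ε / 4 * ‖z - y‖ := by
      refine le_trans (abs_real_inner_le_norm _ _) ?_
      calc ‖σ z - x‖ * ‖f'' y (z - y)‖ ≤ (ε / (4 * (K + 1))) * (K * ‖z - y‖) :=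
            mul_le_mul h4.le ((f'' y).le_opNorm _) (norm_nonneg _) (by positivity)
        _ = (K * (ε / (4 * (K + 1)))) * ‖z - y‖ := by ring
        _ ≤ ε / 4 * ‖z - y‖ := mul_le_mul_of_nonneg_right hKle (norm_nonneg _)
    have hup : g z - g y - (L x) (z - y) ≤ ε * ‖z - y‖ := by
      have h5 : bregman f f' (σ z) y ≤ g y := by rw [hg y]; exact hσmax y (σ z) (hσC z)
      have q1 := (abs_le.mp (hΔ (σ z) (hσC z))).2
      have q2 : (L (σ z)) (z - y) - (L x) (z - y) ≤ ε / 4 * ‖z - y‖ := by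
        rw [hid3]
        calc -⟪σ z - x, f'' y (z - y)⟫ ≤ |(-⟪σ z - x, f'' y (z - y)⟫ : ℝ)| := le_abs_self _
          _ = |(⟪σ z - x, f'' y (z - y)⟫ : ℝ)| := abs_neg _
          _ ≤ ε / 4 * ‖z - y‖ := hL3
      rw [hgz]
      calc bregman f f' (σ z) z - g y - (L x) (z - y)
          ≤ bregman f f' (σ z) z - bregman f f' (σ z) y - (L x) (z - y) := by linarith
        _ = (bregman f f' (σ z) z - bregman f f' (σ z) y - (L (σ z)) (z - y))
            + ((L (σ z)) (z - y) - (L x) (z - y)) := by ring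
        _ ≤ 3 * (ε / 4) * ‖z - y‖ + ε / 4 * ‖z - y‖ := add_le_add q1 q2
        _ = ε * ‖z - y‖ := by ring
    have hlo : -(ε * ‖z - y‖) ≤ g z - g y - (L x) (z - y) := by
      have h5 : bregman f f' x z ≤ g z := by rw [hgz]; exact hσmax z x hxC
      have q1 := (abs_le.mp (hΔ x hxC)).1
      have hn : 0 ≤ ε * ‖z - y‖ := mul_nonneg hε.le (norm_nonneg _)
      rw [hgy]
      calc -(ε * ‖z - y‖) ≤ -(3 * (ε / 4) * ‖z - y‖) := by linarith
        _ ≤ bregman f f' x z - bregman f f' x y - (L x) (z - y) := q1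
        _ ≤ g z - bregman f f' x y - (L x) (z - y) := by linarith
    rw [Real.norm_eq_abs, abs_le]
    exact ⟨hlo, hup⟩
end

section
/- For x ∈ −C, a vector s ∈ ℝ^J belongs to the convex subdifferential ∂(−f∨ + ι_{−C})(x) if and only if −x is a farthest point of ∇f*(s) in C with respect to D_f. -/
open scoped RealInnerProductSpace

/-- For `x ∈ −C`, `s` lies in the convex subdifferential `∂(−f∨ + ι_{−C})(x)` (expressed
by the Fenchel–Young equality, where `(−f∨ + ι_{−C})*(s) = sup_{c∈C}(f(c) − ⟪s,c⟫)`)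
iff `−x` is a farthest point of `∇f*(s)` in `C` w.r.t. `D_f`. -/
theorem subdifferential_iff_farthest {J : ℕ}
    (f : EuclideanSpace ℝ (Fin J) → ℝ) (U : Set (EuclideanSpace ℝ (Fin J)))
    (hU : IsOpen U) (hUne : U.Nonempty)
    (hconv : StrictConvexOn ℝ U f)
    (f' : EuclideanSpace ℝ (Fin J) → EuclideanSpace ℝ (Fin J))
    (hf' : ∀ y ∈ U, HasGradientAt f (f' y) y)
    (hcoer : Filter.Tendsto (fun x : EuclideanSpace ℝ (Fin J) => f x / ‖x‖)
      (Filter.comap norm Filter.atTop) Filter.atTop)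
    (g : EuclideanSpace ℝ (Fin J) → EuclideanSpace ℝ (Fin J))
    (hgU : ∀ s, g s ∈ U) (hgr : ∀ s, f' (g s) = s) (hgl : ∀ y ∈ U, g (f' y) = y)
    (hgcont : Continuous g)
    (C : Set (EuclideanSpace ℝ (Fin J))) (hCne : C.Nonempty)
    (hCcp : IsCompact C) (hCU : C ⊆ U)
    (x : EuclideanSpace ℝ (Fin J)) (hx : x ∈ -C)
    (s : EuclideanSpace ℝ (Fin J)) :
    (-f (-x) + sSup ((fun c => f c - ⟪s, c⟫) '' C) = ⟪s, x⟫) ↔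
      (-x ∈ C ∧ ∀ c ∈ C, bregman f f' c (g s) ≤ bregman f f' (-x) (g s)) := by
  have hxC : -x ∈ C := Set.mem_neg.mp hx
  set φ : EuclideanSpace ℝ (Fin J) → ℝ := fun c => f c - ⟪s, c⟫ with hφ
  have hcont : ContinuousOn φ C := fun c hc =>
    (((hf' c (hCU hc)).continuousAt).sub
      ((continuous_const.inner continuous_id).continuousAt)).continuousWithinAt
  have hbdd : BddAbove (φ '' C) := hCcp.bddAbove_image hcont
  have hne : (φ '' C).Nonempty := hCne.image φ
  have key : ∀ c, (bregman f f' c (g s) ≤ bregman f f' (-x) (g s) ↔ φ c ≤ φ (-x)) := by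
    intro c
    simp only [bregman, hgr, hφ, inner_sub_right, inner_neg_right]
    constructor <;> intro h <;> linarith
  constructor
  · intro h
    have hsup : sSup (φ '' C) = φ (-x) := by
      simp only [hφ, inner_neg_right]; linarith
    refine ⟨hxC, fun c hc => (key c).mpr ?_⟩
    rw [← hsup]
    exact le_csSup hbdd ⟨c, hc, rfl⟩
  · rintro ⟨-, hfar⟩
    have hsup : sSup (φ '' C) = φ (-x) :=
      le_antisymm (csSup_le hne (by rintro y ⟨c, hc, rfl⟩; exact (key c).mp (hfar c hc)))
        (le_csSup hbdd ⟨-x, hxC, rfl⟩)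
    have : φ (-x) = f (-x) - ⟪s, -x⟫ := rfl
    rw [inner_neg_right] at this
    rw [hsup, this]; ring
end

section
/- If the function x ↦ −f(−x) + ι_{−C}(x) (i.e., −f restricted to C supported on −C) is convex, then C is a singleton. -/
open scoped RealInnerProductSpace

/-- If `x ↦ −f(−x)` is convex on `−C` (i.e. `−f∨ + ι_{−C}` is a convex function),
where `f` is essentially strictly convex, then `C` is a singleton. -/
theorem convexity_of_neg_f_implies_singleton {J : ℕ}
    (f : EuclideanSpace ℝ (Fin J) → ℝ) (U : Set (EuclideanSpace ℝ (Fin J)))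
    (hU : IsOpen U) (hUne : U.Nonempty)
    (hconv : StrictConvexOn ℝ U f)
    (C : Set (EuclideanSpace ℝ (Fin J))) (hCne : C.Nonempty)
    (hCcp : IsCompact C) (hCU : C ⊆ U)
    (h : ConvexOn ℝ (-C) (fun x => -f (-x))) :
    ∃ c, C = {c} := by
  obtain ⟨c, hc⟩ := hCne
  refine ⟨c, Set.eq_singleton_iff_unique_mem.2 ⟨hc, fun b hb => ?_⟩⟩
  by_contra hne
  have h1 := h.2 (Set.neg_mem_neg.2 hc) (Set.neg_mem_neg.2 hb)
    (le_of_lt one_half_pos) (le_of_lt one_half_pos) (by norm_num)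
  have h2 := hconv.2 (hCU hc) (hCU hb) (fun hcb => hne (hcb ▸ rfl))
    one_half_pos one_half_pos (by norm_num)
  simp only [smul_neg, ← neg_add, neg_neg, smul_eq_mul] at h1 h2
  linarith
end
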